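/- arXiv:1703.08406 — 6 statements merged into one kernel-verified Lean document; each statement's English description precedes it below -/
import Mathlib

section
/- Let A be a nonnegative random variable, and let E_0, E_1, E_2, ... be i.i.d. exponential random variables with rate μ > 0, independent of the i.i.d. sequence A_1, A_2, ... of copies of A. Define N := min{n ≥ 1 : E_{n-1} ≤ A_n} and B := A_1 + ... + A_{N-1} + E_{N-1}. Then B is exponentially distributed with rate μ. (Busy period insensitivity to the arrival distribution.) -/
open MeasureTheory ProbabilityTheory Filter

open scoped ENNReal

namespace BusyAux

open Set


lemma sum_Icc_one (f : ℕ → ℝ) (m : ℕ) :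
    ∑ i ∈ Finset.Icc 1 m, f i = ∑ j ∈ Finset.range m, f (j + 1) := by
  induction m with
  | zero => simp
  | succ m ih => rw [Finset.sum_Icc_succ_top (by omega), ih, Finset.sum_range_succ]

lemma expMeasure_Iic' {r : ℝ} (hr : 0 < r) (x : ℝ) :
    expMeasure r (Set.Iic x) = ENNReal.ofReal (1 - Real.exp (-(r * max x 0))) := by
  have : IsProbabilityMeasure (expMeasure r) := isProbabilityMeasure_expMeasure hr
  rw [← ofReal_cdf (expMeasure r) x]
  rw [cdf_expMeasure_eq hr]
  rcases le_or_gt 0 x with h0 | h0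
  · rw [if_pos h0, max_eq_left h0]
  · rw [if_neg (not_le.mpr h0), max_eq_right h0.le]
    simp

lemma expMeasure_Ioi' {r : ℝ} (hr : 0 < r) (x : ℝ) :
    expMeasure r (Set.Ioi x) = ENNReal.ofReal (Real.exp (-(r * max x 0))) := by
  have : IsProbabilityMeasure (expMeasure r) := isProbabilityMeasure_expMeasure hr
  have h : Set.Ioi x = (Set.Iic x)ᶜ := (Set.compl_Iic (a := x)).symm
  have hc1 : Real.exp (-(r * max x 0)) ≤ 1 := by
    rw [Real.exp_le_one_iff]
    simp only [neg_nonpos]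
    positivity
  rw [h, measure_compl measurableSet_Iic (measure_ne_top _ _), expMeasure_Iic' hr, measure_univ,
    ← ENNReal.ofReal_one, ← ENNReal.ofReal_sub _ (by linarith [Real.exp_pos (-(r * max x 0))])]
  norm_num

lemma expMeasure_Ioc' {r : ℝ} (hr : 0 < r) (u v : ℝ) :
    expMeasure r (Set.Ioc u v)
      = ENNReal.ofReal (Real.exp (-(r * max u 0)) - Real.exp (-(r * max v 0))) := by
  have : IsProbabilityMeasure (expMeasure r) := isProbabilityMeasure_expMeasure hr
  rcases le_or_gt u v with h | h
  · have hd : Set.Ioc u v = Set.Iic v \ Set.Iic u := by rw [Set.Iic_sdiff_Iic]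
    rw [hd, measure_diff (Set.Iic_subset_Iic.mpr h) measurableSet_Iic.nullMeasurableSet
        (measure_ne_top _ _), expMeasure_Iic' hr, expMeasure_Iic' hr,
      ← ENNReal.ofReal_sub _ (by
        have := Real.exp_le_one_iff.mpr (show -(r * max u 0) ≤ 0 by simp only [neg_nonpos]; positivity)
        linarith)]
    ring_nf
  · rw [Set.Ioc_eq_empty (by exact fun hlt => absurd hlt (not_lt.mpr h.le)), measure_empty]
    symm
    rw [ENNReal.ofReal_eq_zero, sub_nonpos, Real.exp_le_exp]
    have : max v 0 ≤ max u 0 := max_le_max h.le le_rfl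
    nlinarith [le_max_right u (0:ℝ), le_max_right v (0:ℝ)]

lemma tele (L : ℕ → ℝ≥0∞) (hmono : ∀ m, L (m + 1) ≤ L m) (hfin : L 0 ≠ ∞) :
    ∑' m, (L m - L (m + 1)) = L 0 - ⨅ m, L m := by
  have hA : Antitone L := antitone_nat_of_succ_le hmono
  have hL0 : ∀ m, L m ≤ L 0 := fun m => hA (Nat.zero_le m)
  have hpart : ∀ n, ∑ i ∈ Finset.range n, (L i - L (i + 1)) = L 0 - L n := by
    intro n
    induction n with
    | zero => simp
    | succ n ih =>
      rw [Finset.sum_range_succ, ih, tsub_add_tsub_cancel (hL0 n) (hmono n)]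
  rw [ENNReal.tsum_eq_iSup_sum]
  have : ∀ s : Finset ℕ, ∃ n, s ⊆ Finset.range n := fun s => s.exists_nat_subset_range
  apply le_antisymm
  · refine iSup_le fun s => ?_
    obtain ⟨n, hn⟩ := this s
    calc ∑ i ∈ s, (L i - L (i+1)) ≤ ∑ i ∈ Finset.range n, (L i - L (i+1)) :=
          Finset.sum_le_sum_of_subset hn
      _ = L 0 - L n := hpart n
      _ ≤ L 0 - ⨅ m, L m := tsub_le_tsub_left (iInf_le _ n) _
  · rw [ENNReal.sub_iInf]
    refine iSup_le fun n => ?_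
    rw [← hpart n]
    exact le_iSup (fun s : Finset ℕ => ∑ i ∈ s, (L i - L (i+1))) (Finset.range n)

lemma pointwise_key {r : ℝ} (hr : 0 < r) (t s a : ℝ) (hs : 0 ≤ s) (ha : 0 ≤ a) :
    ENNReal.ofReal (Real.exp (-(r * s)) *
        (Real.exp (-(r * max (t - s) 0)) - Real.exp (-(r * a))))
      = ENNReal.ofReal (Real.exp (-(r * max t s)))
        - ENNReal.ofReal (Real.exp (-(r * max t (s + a)))) := by
  rw [← ENNReal.ofReal_sub _ (Real.exp_nonneg _)]
  rcases le_or_gt t (s + a) with hta | hta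
  · rcases le_or_gt t s with hts | hts
    · rw [max_eq_right (by linarith : t - s ≤ 0), max_eq_right hts, max_eq_right hta]
      congr 1
      rw [mul_zero, neg_zero, Real.exp_zero, mul_sub, mul_one, ← Real.exp_add]
      ring_nf
    · rw [max_eq_left (by linarith : 0 ≤ t - s), max_eq_left hts.le, max_eq_right hta]
      congr 1
      rw [mul_sub, ← Real.exp_add, ← Real.exp_add]
      ring_nf
  · rw [max_eq_left (by linarith : 0 ≤ t - s), max_eq_left (by linarith : s ≤ t),
      max_eq_left hta.le, sub_self, ENNReal.ofReal_zero, ENNReal.ofReal_eq_zero]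
    have h1 : Real.exp (-(r * t)) ≤ Real.exp (-(r * (s + a))) := by
      rw [Real.exp_le_exp]; nlinarith
    have h2 : Real.exp (-(r * s)) * Real.exp (-(r * (t - s))) = Real.exp (-(r * t)) := by
      rw [← Real.exp_add]; ring_nf
    have h3 : Real.exp (-(r * s)) * Real.exp (-(r * a)) = Real.exp (-(r * (s + a))) := by
      rw [← Real.exp_add]; ring_nf
    nlinarith [Real.exp_pos (-(r * s)), Real.exp_pos (-(r * (t - s))), Real.exp_pos (-(r * a)),
      Real.exp_pos (-(r * (s + a))), Real.exp_pos (-(r * t))]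




lemma core {Ω : Type*} [MeasureSpace Ω] [IsProbabilityMeasure (ℙ : Measure Ω)]
    {r : ℝ} (hr : 0 < r) (A E : ℕ → Ω → ℝ)
    (hAmeas : ∀ n, Measurable (A n)) (hEmeas : ∀ n, Measurable (E n))
    (hEindep : iIndepFun E ℙ)
    (hEexp : ∀ n, Measure.map (E n) ℙ = expMeasure r)
    (hindep : IndepFun (fun ω => (fun n => A n ω)) (fun ω => (fun n => E n ω)) ℙ)
    (n : ℕ) (G : Set ((ℕ → ℝ) × ℝ)) (hG : MeasurableSet G) :
    ℙ {ω | (∀ k ∈ Finset.range n, A (k + 1) ω < E k ω) ∧ ((fun i => A i ω), E n ω) ∈ G}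
      = ∫⁻ ω, (∏ k ∈ Finset.range n, expMeasure r (Set.Ioi (A (k + 1) ω)))
          * expMeasure r {x | ((fun i => A i ω), x) ∈ G} ∂ℙ := by
  classical
  have hexp : IsProbabilityMeasure (expMeasure r) := isProbabilityMeasure_expMeasure hr
  set 𝒜 : Ω → ℕ → ℝ := fun ω i => A i ω with h𝒜def
  set ℰ : Ω → ℕ → ℝ := fun ω i => E i ω with hℰdef
  have h𝒜 : Measurable 𝒜 := measurable_pi_lambda _ hAmeas
  have hℰ : Measurable ℰ := measurable_pi_lambda _ hEmeas
  have hν : IsProbabilityMeasure (Measure.map ℰ ℙ) := Measure.isProbabilityMeasure_map hℰ.aemeasurable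
  set D : Set ((ℕ → ℝ) × (ℕ → ℝ)) :=
    {p | (∀ k ∈ Finset.range n, p.1 (k + 1) < p.2 k) ∧ (p.1, p.2 n) ∈ G} with hD_def
  have hD : MeasurableSet D := by
    have h1 : MeasurableSet {p : (ℕ → ℝ) × (ℕ → ℝ) | ∀ k ∈ Finset.range n, p.1 (k + 1) < p.2 k} := by
      have heq : {p : (ℕ → ℝ) × (ℕ → ℝ) | ∀ k ∈ Finset.range n, p.1 (k + 1) < p.2 k}
          = ⋂ k ∈ Finset.range n, {p : (ℕ → ℝ) × (ℕ → ℝ) | p.1 (k + 1) < p.2 k} := by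
        ext p; simp
      rw [heq]
      exact MeasurableSet.biInter (Finset.range n).countable_toSet fun k _ =>
        measurableSet_lt (measurable_fst.eval) (measurable_snd.eval)
    have h2 : MeasurableSet {p : (ℕ → ℝ) × (ℕ → ℝ) | (p.1, p.2 n) ∈ G} :=
      (measurable_fst.prodMk ((measurable_pi_apply n).comp measurable_snd)) hG
    exact h1.inter h2
  -- the section measure
  have hsec : ∀ a : ℕ → ℝ, (Measure.map ℰ ℙ) (Prod.mk a ⁻¹' D)
      = (∏ k ∈ Finset.range n, expMeasure r (Set.Ioi (a (k + 1))))
        * expMeasure r {x | (a, x) ∈ G} := by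
    intro a
    set S : ℕ → Set ℝ := fun j => if j = n then {x | (a, x) ∈ G} else Set.Ioi (a (j + 1)) with hS
    have hSmeas : ∀ j, MeasurableSet (S j) := by
      intro j
      rw [hS]
      dsimp only
      split
      · exact measurable_prodMk_left hG
      · exact measurableSet_Ioi
    have hset : Prod.mk a ⁻¹' D = ⋂ j ∈ Finset.range (n + 1), (fun e : ℕ → ℝ => e j) ⁻¹' S j := by
      ext e
      simp only [Set.mem_preimage, Set.mem_iInter, hD_def, Set.mem_setOf_eq, Finset.mem_range, hS]
      constructor
      · rintro ⟨h1, h2⟩ j hj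
        by_cases hjn : j = n
        · subst hjn; simpa using h2
        · have hjn' : j < n := by omega
          simpa [hjn] using h1 j hjn'
      · intro h
        constructor
        · intro k hk
          have := h k (by omega)
          simpa [Nat.ne_of_lt hk] using this
        · have := h n (by omega)
          simpa using this
    have hpre : ℰ ⁻¹' (⋂ j ∈ Finset.range (n + 1), (fun e : ℕ → ℝ => e j) ⁻¹' S j)
        = ⋂ j ∈ Finset.range (n + 1), E j ⁻¹' S j := by
      ext ω; simp [hℰdef]
    rw [hset, Measure.map_apply hℰ (by
      exact MeasurableSet.biInter (Finset.range (n + 1)).countable_toSet fun j _ =>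
        (measurable_pi_apply j) (hSmeas j)), hpre,
      hEindep.measure_inter_preimage_eq_mul (Finset.range (n + 1)) (fun j _ => hSmeas j)]
    have happ : ∀ j, ℙ (E j ⁻¹' S j) = expMeasure r (S j) := by
      intro j
      rw [← hEexp j, Measure.map_apply (hEmeas j) (hSmeas j)]
    calc ∏ j ∈ Finset.range (n + 1), ℙ (E j ⁻¹' S j)
        = ∏ j ∈ Finset.range (n + 1), expMeasure r (S j) := Finset.prod_congr rfl fun j _ => happ j
      _ = (∏ j ∈ Finset.range n, expMeasure r (S j)) * expMeasure r (S n) :=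
          Finset.prod_range_succ _ n
      _ = (∏ k ∈ Finset.range n, expMeasure r (Set.Ioi (a (k + 1))))
            * expMeasure r {x | (a, x) ∈ G} := by
          congr 1
          · refine Finset.prod_congr rfl fun j hj => ?_
            simp only [Finset.mem_range] at hj
            simp [hS, Nat.ne_of_lt hj]
          · simp [hS]
  -- measurability of the integrand as a function of a
  have hFmeas : Measurable (fun a : ℕ → ℝ =>
      (∏ k ∈ Finset.range n, expMeasure r (Set.Ioi (a (k + 1))))
        * expMeasure r {x | (a, x) ∈ G}) := by
    apply Measurable.mul
    · apply Finset.measurable_prod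
      intro k _
      have : (fun a : ℕ → ℝ => expMeasure r (Set.Ioi (a (k + 1))))
          = fun a => ENNReal.ofReal (Real.exp (-(r * max (a (k + 1)) 0))) := by
        funext a; exact expMeasure_Ioi' hr _
      rw [this]
      exact ENNReal.measurable_ofReal.comp
        ((Real.continuous_exp.measurable).comp
          ((measurable_const.mul ((measurable_pi_apply (k + 1)).max measurable_const)).neg))
    · exact measurable_measure_prodMk_left hG
  -- main chain
  have hset0 : {ω | (∀ k ∈ Finset.range n, A (k + 1) ω < E k ω) ∧ ((fun i => A i ω), E n ω) ∈ G}
      = (fun ω => (𝒜 ω, ℰ ω)) ⁻¹' D := rfl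
  rw [hset0, ← Measure.map_apply (h𝒜.prodMk hℰ) hD,
    (indepFun_iff_map_prod_eq_prod_map_map h𝒜.aemeasurable hℰ.aemeasurable).mp hindep,
    Measure.prod_apply hD]
  rw [lintegral_congr hsec, lintegral_map hFmeas h𝒜]

end BusyAux

/-- Busy period insensitivity: with i.i.d. nonnegative inter-arrival times `A 1, A 2, ...`,
i.i.d. `Exp μ` service times `E 0, E 1, ...` independent of the arrival sequence,
`N := min {n ≥ 1 : E (n-1) ≤ A n}` and `B := A 1 + ⋯ + A (N-1) + E (N-1)`,
the random variable `B` is exponentially distributed with rate `μ`. -/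
theorem busy_period_exponential
    {Ω : Type*} [MeasureSpace Ω] [IsProbabilityMeasure (ℙ : Measure Ω)]
    (μ : ℝ) (hμ : 0 < μ)
    (A : ℕ → Ω → ℝ) (E : ℕ → Ω → ℝ)
    (hAmeas : ∀ n, Measurable (A n)) (hEmeas : ∀ n, Measurable (E n))
    (hAnonneg : ∀ n ω, 0 ≤ A n ω)
    -- the A's are i.i.d.
    (hAindep : iIndepFun A ℙ)
    (hAident : ∀ n, Measure.map (A n) ℙ = Measure.map (A 1) ℙ)
    -- the E's are i.i.d. Exp(μ)
    (hEindep : iIndepFun E ℙ)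
    (hEexp : ∀ n, Measure.map (E n) ℙ = expMeasure μ)
    -- the whole E-sequence is independent of the whole A-sequence
    (hindep : IndepFun (fun ω => (fun n => A n ω)) (fun ω => (fun n => E n ω)) ℙ)
    (N : Ω → ℕ)
    (hN : ∀ ω, N ω = sInf {n : ℕ | 1 ≤ n ∧ E (n - 1) ω ≤ A n ω})
    (hNfin : ∀ ω, {n : ℕ | 1 ≤ n ∧ E (n - 1) ω ≤ A n ω}.Nonempty)
    (B : Ω → ℝ)
    (hB : ∀ ω, B ω = (∑ i ∈ Finset.Icc 1 (N ω - 1), A i ω) + E (N ω - 1) ω) :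
    Measure.map B ℙ = expMeasure μ := by
  classical
  have hexp : IsProbabilityMeasure (expMeasure μ) := isProbabilityMeasure_expMeasure hμ
  -- partial sums of the A's
  set S : ℕ → Ω → ℝ := fun m ω => ∑ j ∈ Finset.range m, A (j + 1) ω with hSdef
  have hSmeas : ∀ m, Measurable (S m) := fun m => Finset.measurable_sum _ fun j _ => hAmeas _
  have hSnonneg : ∀ m ω, 0 ≤ S m ω := fun m ω => Finset.sum_nonneg fun j _ => hAnonneg _ ω
  have hSsucc : ∀ m ω, S (m + 1) ω = S m ω + A (m + 1) ω := fun m ω => Finset.sum_range_succ _ m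
  have hSmono : ∀ m ω, S m ω ≤ S (m + 1) ω := fun m ω => by
    rw [hSsucc]; linarith [hAnonneg (m + 1) ω]
  -- N is at least 1 and attains its defining property
  have hNmem : ∀ ω, 1 ≤ N ω ∧ E (N ω - 1) ω ≤ A (N ω) ω := by
    intro ω; rw [hN ω]; exact Nat.sInf_mem (hNfin ω)
  -- characterization of {N = m+1}
  have hNchar : ∀ (m : ℕ) (ω : Ω), N ω = m + 1 ↔
      ((∀ k ∈ Finset.range m, A (k + 1) ω < E k ω) ∧ E m ω ≤ A (m + 1) ω) := by
    intro m ω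
    constructor
    · intro h
      have h2 := (hNmem ω).2
      rw [h] at h2
      simp only [Nat.add_sub_cancel] at h2
      refine ⟨fun k hk => ?_, h2⟩
      simp only [Finset.mem_range] at hk
      by_contra hcon
      push_neg at hcon
      have hmem : (k + 1) ∈ {n : ℕ | 1 ≤ n ∧ E (n - 1) ω ≤ A n ω} :=
        ⟨by omega, by simpa using hcon⟩
      have hinf := Nat.sInf_le hmem
      rw [← hN ω] at hinf
      omega
    · rintro ⟨h1, h2⟩
      have hmem : (m + 1) ∈ {n : ℕ | 1 ≤ n ∧ E (n - 1) ω ≤ A n ω} :=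
        ⟨by omega, by simpa using h2⟩
      have hle : N ω ≤ m + 1 := by rw [hN ω]; exact Nat.sInf_le hmem
      by_contra hne
      have hlt : N ω < m + 1 := by omega
      have h1' := hNmem ω
      have hk : N ω - 1 < m := by omega
      have habs := h1 (N ω - 1) (Finset.mem_range.mpr hk)
      have hNω : N ω - 1 + 1 = N ω := by omega
      rw [hNω] at habs
      exact absurd h1'.2 (not_le.mpr habs)
  -- measurability of {N = m+1}
  have hNset : ∀ m, MeasurableSet {ω | N ω = m + 1} := by
    intro m
    have heq : {ω | N ω = m + 1}
        = (⋂ k ∈ Finset.range m, {ω | A (k + 1) ω < E k ω}) ∩ {ω | E m ω ≤ A (m + 1) ω} := by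
      ext ω
      simp only [Set.mem_setOf_eq, Set.mem_inter_iff, Set.mem_iInter, hNchar m ω,
        Finset.mem_range]
    rw [heq]
    exact (MeasurableSet.biInter (Finset.range m).countable_toSet fun k _ =>
      measurableSet_lt (hAmeas _) (hEmeas _)).inter (measurableSet_le (hEmeas m) (hAmeas _))
  -- the parametrized sets for the core lemma
  set Gset : ℕ → ℝ → Set ((ℕ → ℝ) × ℝ) := fun m t =>
    {p | p.2 ≤ p.1 (m + 1) ∧ t < (∑ j ∈ Finset.range m, p.1 (j + 1)) + p.2} with hGdef
  have hGmeas : ∀ m t, MeasurableSet (Gset m t) := by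
    intro m t
    have h1 : MeasurableSet {p : (ℕ → ℝ) × ℝ | p.2 ≤ p.1 (m + 1)} :=
      measurableSet_le measurable_snd (measurable_fst.eval)
    have h2 : MeasurableSet {p : (ℕ → ℝ) × ℝ | t < (∑ j ∈ Finset.range m, p.1 (j + 1)) + p.2} :=
      measurableSet_lt measurable_const
        ((Finset.measurable_sum (Finset.range m) (fun j _ =>
          (measurable_fst.eval : Measurable fun p : (ℕ → ℝ) × ℝ => p.1 (j + 1)))).add
          measurable_snd)
    exact h1.inter h2
  -- rewriting the events
  have hEvtEq : ∀ (m : ℕ) (t : ℝ), {ω | N ω = m + 1 ∧ t < S m ω + E m ω}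
      = {ω | (∀ k ∈ Finset.range m, A (k + 1) ω < E k ω) ∧
          ((fun i => A i ω), E m ω) ∈ Gset m t} := by
    intro m t
    ext ω
    simp only [Set.mem_setOf_eq, hNchar m ω, hGdef, hSdef]
    tauto
  -- the key quantities
  set L : ℝ → ℕ → ℝ≥0∞ :=
    fun t m => ∫⁻ ω, ENNReal.ofReal (Real.exp (-(μ * max t (S m ω)))) ∂ℙ with hLdef
  have hLfunmeas : ∀ t m, Measurable fun ω => ENNReal.ofReal (Real.exp (-(μ * max t (S m ω)))) := by
    intro t m
    exact ENNReal.measurable_ofReal.comp (Real.continuous_exp.measurable.comp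
      ((measurable_const.mul ((measurable_const.max (hSmeas m)))).neg))
  have hLle1 : ∀ t m, L t m ≤ 1 := by
    intro t m
    calc L t m ≤ ∫⁻ _, 1 ∂ℙ := lintegral_mono fun ω => by
          rw [ENNReal.ofReal_le_one, Real.exp_le_one_iff]
          have h1 := hSnonneg m ω
          have h2 := le_max_right t (S m ω)
          nlinarith
      _ = 1 := by simp
  have hLmono : ∀ t m, L t (m + 1) ≤ L t m := by
    intro t m
    apply lintegral_mono
    intro ω
    apply ENNReal.ofReal_le_ofReal
    apply Real.exp_le_exp.mpr
    have h1 : max t (S m ω) ≤ max t (S (m + 1) ω) := max_le_max le_rfl (hSmono m ω)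
    nlinarith
  -- Key computation
  have key1 : ∀ (t : ℝ) (m : ℕ),
      ℙ {ω | N ω = m + 1 ∧ t < S m ω + E m ω} = L t m - L t (m + 1) := by
    intro t m
    rw [hEvtEq m t,
      BusyAux.core hμ A E hAmeas hEmeas hEindep hEexp hindep m (Gset m t) (hGmeas m t)]
    have hpt : ∀ ω, (∏ k ∈ Finset.range m, expMeasure μ (Set.Ioi (A (k + 1) ω)))
        * expMeasure μ {x | ((fun i => A i ω), x) ∈ Gset m t}
        = ENNReal.ofReal (Real.exp (-(μ * max t (S m ω))))
          - ENNReal.ofReal (Real.exp (-(μ * max t (S (m + 1) ω)))) := by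
      intro ω
      have hfac : ∀ k ∈ Finset.range m, expMeasure μ (Set.Ioi (A (k + 1) ω))
          = ENNReal.ofReal (Real.exp (-(μ * A (k + 1) ω))) := by
        intro k _
        rw [BusyAux.expMeasure_Ioi' hμ, max_eq_left (hAnonneg _ ω)]
      have hprod : (∏ k ∈ Finset.range m, expMeasure μ (Set.Ioi (A (k + 1) ω)))
          = ENNReal.ofReal (Real.exp (-(μ * S m ω))) := by
        rw [Finset.prod_congr rfl hfac,
          ← ENNReal.ofReal_prod_of_nonneg (fun i _ => Real.exp_nonneg _)]
        congr 1
        rw [← Real.exp_sum]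
        congr 1
        rw [hSdef]
        simp only []
        rw [Finset.mul_sum, ← Finset.sum_neg_distrib]
      have hsec : {x : ℝ | ((fun i => A i ω), x) ∈ Gset m t}
          = Set.Ioc (t - S m ω) (A (m + 1) ω) := by
        ext x
        simp only [hGdef, Set.mem_setOf_eq, Set.mem_Ioc, hSdef]
        constructor
        · rintro ⟨h1, h2⟩; exact ⟨by linarith, h1⟩
        · rintro ⟨h1, h2⟩; exact ⟨h2, by linarith⟩
      rw [hprod, hsec, BusyAux.expMeasure_Ioc' hμ, max_eq_left (hAnonneg _ ω),
        ← ENNReal.ofReal_mul (Real.exp_nonneg _), hSsucc m ω]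
      exact BusyAux.pointwise_key hμ t (S m ω) (A (m + 1) ω) (hSnonneg m ω) (hAnonneg _ ω)
    rw [lintegral_congr hpt,
      lintegral_sub (hLfunmeas t (m + 1)) (by
        exact ne_top_of_le_ne_top ENNReal.one_ne_top (hLle1 t (m + 1)))
        (Filter.Eventually.of_forall fun ω => by
          apply ENNReal.ofReal_le_ofReal
          apply Real.exp_le_exp.mpr
          have h1 : max t (S m ω) ≤ max t (S (m + 1) ω) := max_le_max le_rfl (hSmono m ω)
          nlinarith)]
  -- E m ≤ 0 is a null event
  have hE0 : ∀ m : ℕ, ℙ {ω | E m ω ≤ (0 : ℝ)} = 0 := by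
    intro m
    have heq : {ω | E m ω ≤ (0 : ℝ)} = E m ⁻¹' Set.Iic 0 := rfl
    rw [heq, ← Measure.map_apply (hEmeas m) measurableSet_Iic, hEexp m,
      BusyAux.expMeasure_Iic' hμ]
    simp
  have key2 : ∀ m : ℕ, ℙ {ω | N ω = m + 1} = L 0 m - L 0 (m + 1) := by
    intro m
    rw [← key1 0 m]
    apply le_antisymm
    · calc ℙ {ω | N ω = m + 1}
          ≤ ℙ ({ω | N ω = m + 1 ∧ (0:ℝ) < S m ω + E m ω} ∪ {ω | E m ω ≤ (0:ℝ)}) := by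
            apply measure_mono
            intro ω h
            rcases le_or_gt (E m ω) 0 with h0 | h0
            · exact Or.inr h0
            · exact Or.inl ⟨h, by have := hSnonneg m ω; linarith⟩
        _ ≤ ℙ {ω | N ω = m + 1 ∧ (0:ℝ) < S m ω + E m ω} + ℙ {ω | E m ω ≤ (0:ℝ)} :=
            measure_union_le _ _
        _ = ℙ {ω | N ω = m + 1 ∧ (0:ℝ) < S m ω + E m ω} := by rw [hE0 m, add_zero]
    · exact measure_mono fun ω h => h.1
  -- event measurability for the partition
  have hEvtMeas : ∀ (m : ℕ) (t : ℝ), MeasurableSet {ω | N ω = m + 1 ∧ t < S m ω + E m ω} := by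
    intro m t
    exact (hNset m).inter (measurableSet_lt measurable_const ((hSmeas m).add (hEmeas m)))
  have hBval : ∀ ω, B ω = S (N ω - 1) ω + E (N ω - 1) ω := by
    intro ω
    rw [hB ω]
    congr 1
    exact BusyAux.sum_Icc_one (fun i => A i ω) (N ω - 1)
  have hdisj : ∀ t : ℝ, Pairwise (Function.onFun Disjoint
      fun m => {ω | N ω = m + 1 ∧ t < S m ω + E m ω}) := by
    intro t i j hij
    rw [Function.onFun, Set.disjoint_left]
    rintro ω ⟨hi, _⟩ ⟨hj, _⟩
    exact hij (by omega)
  have hpartition : ∀ t : ℝ,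
      ℙ (B ⁻¹' Set.Ioi t) = ∑' m, ℙ {ω | N ω = m + 1 ∧ t < S m ω + E m ω} := by
    intro t
    have hUn : B ⁻¹' Set.Ioi t = ⋃ m, {ω | N ω = m + 1 ∧ t < S m ω + E m ω} := by
      ext ω
      simp only [Set.mem_preimage, Set.mem_Ioi, Set.mem_iUnion, Set.mem_setOf_eq]
      have h1 : N ω - 1 + 1 = N ω := by have := (hNmem ω).1; omega
      constructor
      · intro h
        refine ⟨N ω - 1, h1.symm, ?_⟩
        rw [← hBval ω]; exact h
      · rintro ⟨m, hm, hs⟩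
        rw [hBval ω]
        have hm' : N ω - 1 = m := by omega
        rwa [hm']
    rw [hUn, measure_iUnion (hdisj t) (fun m => hEvtMeas m t)]
  -- total mass
  have htotal : (1 : ℝ≥0∞) = ∑' m, ℙ {ω | N ω = m + 1} := by
    have hUn : (Set.univ : Set Ω) = ⋃ m, {ω | N ω = m + 1} := by
      ext ω
      simp only [Set.mem_univ, Set.mem_iUnion, Set.mem_setOf_eq, true_iff]
      exact ⟨N ω - 1, by have := (hNmem ω).1; omega⟩
    have hdisj' : Pairwise (Function.onFun Disjoint fun m => {ω | N ω = m + 1}) := by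
      intro i j hij
      rw [Function.onFun, Set.disjoint_left]
      rintro ω hi hj
      simp only [Set.mem_setOf_eq] at hi hj
      exact hij (by omega)
    have hium : ℙ (⋃ m, {ω | N ω = m + 1}) = ∑' m, ℙ {ω | N ω = m + 1} :=
      measure_iUnion hdisj' hNset
    rw [← hium, ← hUn]
    exact measure_univ.symm
  have hL00 : L 0 0 = 1 := by
    rw [hLdef]
    simp only [hSdef, Finset.range_zero, Finset.sum_empty, max_self, mul_zero, neg_zero,
      Real.exp_zero, ENNReal.ofReal_one]
    simp
  have hinf0 : ⨅ m, L 0 m = 0 := by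
    have htele := BusyAux.tele (L 0) (hLmono 0) (by rw [hL00]; exact ENNReal.one_ne_top)
    have heq1 : (1 : ℝ≥0∞) = 1 - ⨅ m, L 0 m := by
      calc (1 : ℝ≥0∞) = ∑' m, ℙ {ω | N ω = m + 1} := htotal
        _ = ∑' m, (L 0 m - L 0 (m + 1)) := tsum_congr key2
        _ = L 0 0 - ⨅ m, L 0 m := htele
        _ = 1 - ⨅ m, L 0 m := by rw [hL00]
    have hle : ⨅ m, L 0 m ≤ 1 := le_trans (iInf_le _ 0) (hLle1 0 0)
    calc ⨅ m, L 0 m = 1 - (1 - ⨅ m, L 0 m) :=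
          (ENNReal.sub_sub_cancel ENNReal.one_ne_top hle).symm
      _ = 1 - 1 := by rw [← heq1]
      _ = 0 := by simp
  -- main formula for the upper tail of B
  have hmain : ∀ t : ℝ, ℙ (B ⁻¹' Set.Ioi t) = ENNReal.ofReal (Real.exp (-(μ * max t 0))) := by
    intro t
    have hinft : ⨅ m, L t m = 0 := by
      apply le_antisymm _ (zero_le)
      rw [← hinf0]
      apply iInf_mono
      intro m
      apply lintegral_mono
      intro ω
      apply ENNReal.ofReal_le_ofReal
      apply Real.exp_le_exp.mpr
      have h1 : max 0 (S m ω) = S m ω := max_eq_right (hSnonneg m ω)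
      have h2 : S m ω ≤ max t (S m ω) := le_max_right _ _
      nlinarith
    rw [hpartition t, tsum_congr (fun m => key1 t m),
      BusyAux.tele (L t) (hLmono t) (ne_top_of_le_ne_top ENNReal.one_ne_top (hLle1 t 0)),
      hinft, tsub_zero, hLdef]
    simp only [hSdef, Finset.range_zero, Finset.sum_empty]
    rw [lintegral_const]
    simp
  -- measurability of B
  have hBmeas : Measurable B := by
    intro s hs
    have hrep : B ⁻¹' s
        = ⋃ m, ({ω | N ω = m + 1} ∩ ((fun ω => S m ω + E m ω) ⁻¹' s)) := by
      ext ω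
      simp only [Set.mem_preimage, Set.mem_iUnion, Set.mem_inter_iff, Set.mem_setOf_eq]
      have h1 : N ω - 1 + 1 = N ω := by have := (hNmem ω).1; omega
      constructor
      · intro h
        exact ⟨N ω - 1, h1.symm, by rw [← hBval ω]; exact h⟩
      · rintro ⟨m, hm, hsm⟩
        have hm' : N ω - 1 = m := by omega
        rw [hBval ω, hm']
        exact hsm
    rw [hrep]
    exact MeasurableSet.iUnion fun m => (hNset m).inter (((hSmeas m).add (hEmeas m)) hs)
  have hmapprob : IsProbabilityMeasure (Measure.map B ℙ) :=
    Measure.isProbabilityMeasure_map hBmeas.aemeasurable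
  refine Measure.ext_of_Iic (Measure.map B ℙ) (expMeasure μ) fun t => ?_
  rw [Measure.map_apply hBmeas measurableSet_Iic, BusyAux.expMeasure_Iic' hμ]
  have hcompl : B ⁻¹' Set.Iic t = (B ⁻¹' Set.Ioi t)ᶜ := by
    rw [← Set.preimage_compl, Set.compl_Ioi]
  rw [hcompl, measure_compl (hBmeas measurableSet_Ioi) (measure_ne_top _ _), measure_univ,
    hmain t, ← ENNReal.ofReal_one, ← ENNReal.ofReal_sub _ (Real.exp_nonneg _)]
end

section
/- Let (π_k)_{k≥0} be a probability distribution on the nonnegative integers satisfying the balance equations λ π_k = (k+1) μ Σ_{i ≥ k+1} π_i for all k ≥ 0, where λ, μ > 0, and suppose all factorial moments m_n := E[∏_{i=0}^{n-1}(Q - i)] of a random variable Q with P(Q = k) = π_k are finite. Then with ρ := λ/μ, the factorial moments satisfy the recursion m_{n+2} = (n+2)(ρ m_n − m_{n+1}) for all n ≥ 0, where m_0 = 1. -/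
open MeasureTheory

lemma prodfac_nonneg (n k : ℕ) : 0 ≤ ∏ j ∈ Finset.range n, ((k : ℝ) - j) := by
  rcases lt_or_ge k n with h | h
  · rw [Finset.prod_eq_zero (Finset.mem_range.mpr h) (by simp)]
  · apply Finset.prod_nonneg
    intro j hj
    have hjn : j < n := Finset.mem_range.mp hj
    have : (j : ℝ) ≤ (k : ℝ) := by exact_mod_cast le_of_lt (lt_of_lt_of_le hjn h)
    linarith

lemma prod_shift (mm : ℕ) (x : ℝ) :
    ∏ j ∈ Finset.range (mm + 1), (x + 1 - j) =
      (∏ j ∈ Finset.range mm, (x - j)) * (x + 1) := by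
  rw [Finset.prod_range_succ']
  congr 1
  · apply Finset.prod_congr rfl
    intro j _
    push_cast
    ring
  · norm_num

lemma key_sum (n : ℕ) (i : ℕ) :
    ((n : ℝ) + 2) * ∑ k ∈ Finset.range i,
        (∏ j ∈ Finset.range n, ((k : ℝ) - j)) * ((k : ℝ) + 1)
      = (∏ j ∈ Finset.range (n + 2), ((i : ℝ) - j))
        + ((n : ℝ) + 2) * ∏ j ∈ Finset.range (n + 1), ((i : ℝ) - j) := by
  induction i with
  | zero => simp [Finset.prod_range_succ']
  | succ i ih =>
      rw [Finset.sum_range_succ, mul_add, ih]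
      have hc : ((i + 1 : ℕ) : ℝ) = (i : ℝ) + 1 := by push_cast; ring
      rw [hc, prod_shift (n + 1) (i : ℝ), prod_shift n (i : ℝ),
        Finset.prod_range_succ (fun j => (i : ℝ) - j) (n + 1),
        Finset.prod_range_succ (fun j => (i : ℝ) - j) n]
      push_cast
      ring

/-- For a probability distribution `π` on `ℕ` satisfying the balance equations
`λ π_k = (k+1) μ ∑_{i ≥ k+1} π_i`, the factorial moments
`m_n = ∑_k (∏_{i<n} (k - i)) π_k` (assumed finite, i.e. the defining series are
summable) satisfy `m_{n+2} = (n+2)(ρ m_n - m_{n+1})` with `ρ = λ/μ` and `m_0 = 1`. -/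
theorem factorial_moment_recursion
    (lam mu : ℝ) (hlam : 0 < lam) (hmu : 0 < mu)
    (π : ℕ → ℝ) (hπnonneg : ∀ k, 0 ≤ π k) (hπsum : Summable π)
    (hπtotal : ∑' k, π k = 1)
    (hbalance : ∀ k : ℕ,
      lam * π k = ((k : ℝ) + 1) * mu * ∑' i : ℕ, if k + 1 ≤ i then π i else 0)
    (m : ℕ → ℝ)
    (hm : ∀ n, m n = ∑' k : ℕ, (∏ i ∈ Finset.range n, ((k : ℝ) - i)) * π k)
    (hmsum : ∀ n, Summable (fun k : ℕ => (∏ i ∈ Finset.range n, ((k : ℝ) - i)) * π k))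
    (ρ : ℝ) (hρ : ρ = lam / mu) :
    m 0 = 1 ∧ ∀ n : ℕ, m (n + 2) = ((n : ℝ) + 2) * (ρ * m n - m (n + 1)) := by
  constructor
  · rw [hm 0]; simpa using hπtotal
  intro n
  set c : ℝ := (n : ℝ) + 2 with hc
  have hcpos : (0 : ℝ) < c := by positivity
  set P : ℕ → ℝ := fun k => ∏ j ∈ Finset.range n, ((k : ℝ) - j) with hP
  set g : ℕ → ℝ := fun k => P k * ((k : ℝ) + 1) with hg
  set T : ℕ → ℝ := fun k => ∑' i : ℕ, if k + 1 ≤ i then π i else 0 with hT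
  -- balance in terms of ρ
  have hρπ : ∀ k : ℕ, ρ * π k = ((k : ℝ) + 1) * T k := by
    intro k
    have hb := hbalance k
    have : ρ * π k = lam * π k / mu := by rw [hρ]; ring
    rw [this, hb]
    field_simp
    ring
  -- the double-sum function
  set F : ℕ → ℕ → ℝ := fun i k => if k + 1 ≤ i then g k * π i else 0 with hF
  have hgnonneg : ∀ k, 0 ≤ g k := by
    intro k
    apply mul_nonneg (prodfac_nonneg n k)
    positivity
  have hFnonneg : (0 : ℕ × ℕ → ℝ) ≤ Function.uncurry F := by
    intro p
    simp only [Function.uncurry, hF, Pi.zero_apply]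
    split
    · exact mul_nonneg (hgnonneg _) (hπnonneg _)
    · exact le_rfl
  -- each row (fixed i) has finite support
  have hrow_zero : ∀ i : ℕ, ∀ k ∉ Finset.range i, F i k = 0 := by
    intro i k hk
    have : ¬ (k + 1 ≤ i) := by
      simp only [Finset.mem_range, not_lt] at hk
      omega
    simp only [hF, this, ↓reduceIte]
  have hrow_sum : ∀ i : ℕ, (∑' k, F i k) = π i * ∑ k ∈ Finset.range i, g k := by
    intro i
    rw [tsum_eq_sum (hrow_zero i), Finset.mul_sum]
    apply Finset.sum_congr rfl
    intro k hk
    have : k + 1 ≤ i := Finset.mem_range.mp hk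
    simp only [hF, this, ↓reduceIte]
    ring
  have hrow_summable : ∀ i : ℕ, Summable (fun k => F i k) := fun i =>
    summable_of_ne_finset_zero (hrow_zero i)
  -- key identity for the partial sums
  have hS : ∀ i : ℕ, c * (π i * ∑ k ∈ Finset.range i, g k)
      = (∏ j ∈ Finset.range (n + 2), ((i : ℝ) - j)) * π i
        + c * ((∏ j ∈ Finset.range (n + 1), ((i : ℝ) - j)) * π i) := by
    intro i
    have := key_sum n i
    calc c * (π i * ∑ k ∈ Finset.range i, g k)
        = π i * (c * ∑ k ∈ Finset.range i,
            (∏ j ∈ Finset.range n, ((k : ℝ) - j)) * ((k : ℝ) + 1)) := by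
          simp only [hg, hP, hc]; ring
      _ = π i * ((∏ j ∈ Finset.range (n + 2), ((i : ℝ) - j))
            + c * ∏ j ∈ Finset.range (n + 1), ((i : ℝ) - j)) := by rw [hc, this]
      _ = _ := by ring
  -- summability of column sums
  have hcol_fun : (fun i => ∑' k, F i k)
      = fun i => π i * ∑ k ∈ Finset.range i, g k := funext hrow_sum
  have hcol_summable : Summable (fun i => ∑' k, F i k) := by
    rw [hcol_fun]
    have h1 : Summable (fun i : ℕ =>
        (∏ j ∈ Finset.range (n + 2), ((i : ℝ) - j)) * π i
          + c * ((∏ j ∈ Finset.range (n + 1), ((i : ℝ) - j)) * π i)) :=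
      (hmsum (n + 2)).add ((hmsum (n + 1)).mul_left c)
    have h2 : (fun i : ℕ => π i * ∑ k ∈ Finset.range i, g k)
        = fun i : ℕ => (1 / c) * ((∏ j ∈ Finset.range (n + 2), ((i : ℝ) - j)) * π i
          + c * ((∏ j ∈ Finset.range (n + 1), ((i : ℝ) - j)) * π i)) := by
      funext i
      rw [← hS i]
      field_simp
    rw [h2]
    exact h1.mul_left _
  -- summability of the whole double family
  have hFsummable : Summable (Function.uncurry F) := by
    rw [summable_prod_of_nonneg hFnonneg]
    exact ⟨hrow_summable, hcol_summable⟩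
  -- Fubini
  have hswap : ∑' k, ∑' i, F i k = ∑' i, ∑' k, F i k := Summable.tsum_comm hFsummable
  -- left side equals ρ * m n
  have hleft : ∑' k, ∑' i, F i k = ρ * m n := by
    have h1 : ∀ k : ℕ, ∑' i, F i k = g k * T k := by
      intro k
      rw [hT]
      rw [← tsum_mul_left]
      apply tsum_congr
      intro i
      simp only [hF, mul_ite, mul_zero]
    calc ∑' k, ∑' i, F i k = ∑' k, g k * T k := tsum_congr h1
      _ = ∑' k, ρ * (P k * π k) := by
          apply tsum_congr
          intro k
          rw [hg]
          have := hρπ k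
          calc P k * ((k : ℝ) + 1) * T k = P k * (((k : ℝ) + 1) * T k) := by ring
            _ = P k * (ρ * π k) := by rw [this]
            _ = ρ * (P k * π k) := by ring
      _ = ρ * ∑' k, P k * π k := tsum_mul_left
      _ = ρ * m n := by rw [hm n]
  -- right side
  have hright : c * ∑' i, ∑' k, F i k = m (n + 2) + c * m (n + 1) := by
    rw [hcol_fun, ← tsum_mul_left]
    have : (fun i => c * (π i * ∑ k ∈ Finset.range i, g k))
        = fun i : ℕ => (∏ j ∈ Finset.range (n + 2), ((i : ℝ) - j)) * π i
          + c * ((∏ j ∈ Finset.range (n + 1), ((i : ℝ) - j)) * π i) := funext hS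
    rw [this, Summable.tsum_add (hmsum (n + 2)) ((hmsum (n + 1)).mul_left c),
      tsum_mul_left, hm (n + 2), hm (n + 1)]
  have hmain : c * (ρ * m n) = m (n + 2) + c * m (n + 1) := by
    rw [← hleft, hswap, hright]
  have hexp : c * (ρ * m n - m (n + 1)) = c * (ρ * m n) - c * m (n + 1) := by ring
  rw [hexp]
  linarith [hmain]
end

section
/- Let à be a nonnegative random variable with E[Ã] = 1 and P(Ã > 0) > 0, and for ρ > 0 and k ≥ 1 define P(Q_ρ ≥ k) = ((1 − E[e^{−kÃ/ρ}])/(k/ρ)) ∏_{i=1}^{k−1} E[e^{−iÃ/ρ}]. Then for every x > 0, P(Q_ρ/√ρ ≥ x) → e^{−x²/2} as ρ → ∞. -/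
open MeasureTheory ProbabilityTheory Filter

section SQAux

variable {Ω : Type*} [MeasureSpace Ω] [IsProbabilityMeasure (ℙ : Measure Ω)]
variable {Atil : Ω → ℝ}

lemma sq_integ (hmeas : Measurable Atil) (hnonneg : ∀ ω, 0 ≤ Atil ω) {s : ℝ} (hs : 0 ≤ s) :
    Integrable (fun ω => Real.exp (-s * Atil ω)) ℙ := by
  refine Integrable.mono' (integrable_const 1)
    ((hmeas.const_mul (-s)).exp.aestronglyMeasurable) ?_
  filter_upwards with ω
  rw [Real.norm_eq_abs, abs_of_pos (Real.exp_pos _)]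
  exact Real.exp_le_one_iff.mpr (by nlinarith [hnonneg ω])

lemma sq_phi_pos (hmeas : Measurable Atil) (hnonneg : ∀ ω, 0 ≤ Atil ω) {s : ℝ} (hs : 0 ≤ s) :
    0 < ∫ ω, Real.exp (-s * Atil ω) ∂ℙ := by
  rw [integral_pos_iff_support_of_nonneg (fun ω => (Real.exp_pos _).le)
    (sq_integ hmeas hnonneg hs)]
  have : Function.support (fun ω => Real.exp (-s * Atil ω)) = Set.univ :=
    Set.eq_univ_of_forall fun ω => Real.exp_ne_zero _
  rw [this]
  simp

lemma sq_phi_le_one (hmeas : Measurable Atil) (hnonneg : ∀ ω, 0 ≤ Atil ω) {s : ℝ} (hs : 0 ≤ s) :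
    ∫ ω, Real.exp (-s * Atil ω) ∂ℙ ≤ 1 := by
  calc ∫ ω, Real.exp (-s * Atil ω) ∂ℙ ≤ ∫ _ω, (1:ℝ) ∂ℙ := by
        refine integral_mono (sq_integ hmeas hnonneg hs) (integrable_const 1) fun ω => ?_
        exact Real.exp_le_one_iff.mpr (by nlinarith [hnonneg ω])
    _ = 1 := by simp

lemma sq_phi_lt_one (hmeas : Measurable Atil) (hnonneg : ∀ ω, 0 ≤ Atil ω)
    (hpos : 0 < ℙ {ω | 0 < Atil ω}) {s : ℝ} (hs : 0 < s) :
    ∫ ω, Real.exp (-s * Atil ω) ∂ℙ < 1 := by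
  have h : 0 < ∫ ω, (1 - Real.exp (-s * Atil ω)) ∂ℙ := by
    refine (integral_pos_iff_support_of_nonneg_ae ?_ ?_).2 ?_
    · filter_upwards with ω
      simp only [Pi.zero_apply]
      have : Real.exp (-s * Atil ω) ≤ 1 := Real.exp_le_one_iff.mpr (by nlinarith [hnonneg ω])
      linarith
    · exact (integrable_const 1).sub (sq_integ hmeas hnonneg hs.le)
    · refine lt_of_lt_of_le hpos (measure_mono fun ω (hω : 0 < Atil ω) => ?_)
      have hlt : Real.exp (-s * Atil ω) < 1 := by
        rw [Real.exp_lt_one_iff]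
        nlinarith
      simp only [Function.mem_support]
      exact sub_ne_zero.mpr (ne_of_lt hlt).symm
  rw [integral_sub (integrable_const 1) (sq_integ hmeas hnonneg hs.le)] at h
  simp only [integral_const, measure_univ, ENNReal.toReal_one, probReal_univ, smul_eq_mul, one_mul] at h
  linarith

lemma sq_tendsto_ratio (hmeas : Measurable Atil) (hnonneg : ∀ ω, 0 ≤ Atil ω)
    (hint : Integrable Atil ℙ) (hmean : ∫ ω, Atil ω ∂ℙ = 1) :
    Tendsto (fun s : ℝ => (1 - ∫ ω, Real.exp (-s * Atil ω) ∂ℙ) / s) (nhdsWithin 0 (Set.Ioi 0))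
      (nhds 1) := by
  have key : Tendsto (fun s : ℝ => ∫ ω, (1 - Real.exp (-s * Atil ω)) / s ∂ℙ)
      (nhdsWithin 0 (Set.Ioi 0)) (nhds (∫ ω, Atil ω ∂ℙ)) := by
    apply tendsto_integral_filter_of_dominated_convergence Atil
    · filter_upwards [self_mem_nhdsWithin] with s hs
      exact ((measurable_const.sub (hmeas.const_mul (-s)).exp).div_const s).aestronglyMeasurable
    · filter_upwards [self_mem_nhdsWithin] with s hs
      replace hs : 0 < s := hs
      filter_upwards with ω
      have hA := hnonneg ω
      have h1 : Real.exp (-s * Atil ω) ≤ 1 := Real.exp_le_one_iff.mpr (by nlinarith)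
      have h2 : 1 - s * Atil ω ≤ Real.exp (-s * Atil ω) := by
        have := Real.add_one_le_exp (-s * Atil ω); linarith
      rw [Real.norm_eq_abs, abs_div, abs_of_nonneg (by linarith), abs_of_pos hs, div_le_iff₀ hs]
      nlinarith
    · exact hint
    · filter_upwards with ω
      have hd : HasDerivAt (fun s : ℝ => 1 - Real.exp (-s * Atil ω)) (Atil ω) 0 := by
        have h1 : HasDerivAt (fun s : ℝ => -s * Atil ω) (-Atil ω) 0 := by
          simpa using (hasDerivAt_id (0:ℝ)).neg.mul_const (Atil ω)
        have h3 := (hasDerivAt_const (0:ℝ) (1:ℝ)).sub h1.exp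
        simpa [Pi.sub_def] using h3
      have hslope := hasDerivAt_iff_tendsto_slope.mp hd
      have hmono : Tendsto (slope (fun s : ℝ => 1 - Real.exp (-s * Atil ω)) 0)
          (nhdsWithin 0 (Set.Ioi 0)) (nhds (Atil ω)) :=
        hslope.mono_left (nhdsWithin_mono _ fun y hy => ne_of_gt hy)
      refine hmono.congr fun s => ?_
      simp [slope_def_field]
  rw [hmean] at key
  refine key.congr' ?_
  filter_upwards [self_mem_nhdsWithin] with s hs
  replace hs : 0 < s := hs
  rw [integral_div, integral_sub (integrable_const 1) (sq_integ hmeas hnonneg hs.le)]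
  simp

lemma sq_tendsto_phi (hmeas : Measurable Atil) (hnonneg : ∀ ω, 0 ≤ Atil ω)
    (hint : Integrable Atil ℙ) (hmean : ∫ ω, Atil ω ∂ℙ = 1) :
    Tendsto (fun s : ℝ => ∫ ω, Real.exp (-s * Atil ω) ∂ℙ) (nhdsWithin 0 (Set.Ioi 0))
      (nhds 1) := by
  have hid : Tendsto (fun s : ℝ => s) (nhdsWithin 0 (Set.Ioi 0)) (nhds 0) :=
    tendsto_id.mono_right nhdsWithin_le_nhds
  have h' : Tendsto (fun s : ℝ => 1 - s * ((1 - ∫ ω, Real.exp (-s * Atil ω) ∂ℙ) / s))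
      (nhdsWithin 0 (Set.Ioi 0)) (nhds (1 - 0 * 1)) :=
    tendsto_const_nhds.sub (hid.mul (sq_tendsto_ratio hmeas hnonneg hint hmean))
  rw [show (1:ℝ) - 0 * 1 = 1 by ring] at h'
  refine h'.congr' ?_
  filter_upwards [self_mem_nhdsWithin] with s hs
  replace hs : 0 < s := hs
  rw [← mul_div_assoc, mul_div_cancel_left₀ _ hs.ne']
  ring

lemma sq_tendsto_log (hmeas : Measurable Atil) (hnonneg : ∀ ω, 0 ≤ Atil ω)
    (hint : Integrable Atil ℙ) (hmean : ∫ ω, Atil ω ∂ℙ = 1)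
    (hpos : 0 < ℙ {ω | 0 < Atil ω}) :
    Tendsto (fun s : ℝ => Real.log (∫ ω, Real.exp (-s * Atil ω) ∂ℙ) / s)
      (nhdsWithin 0 (Set.Ioi 0)) (nhds (-1)) := by
  set φ : ℝ → ℝ := fun s => ∫ ω, Real.exp (-s * Atil ω) ∂ℙ with hφ
  have hφ1 : Tendsto φ (nhdsWithin 0 (Set.Ioi 0)) (nhds 1) :=
    sq_tendsto_phi hmeas hnonneg hint hmean
  have hne : ∀ᶠ s in nhdsWithin (0:ℝ) (Set.Ioi 0), φ s ≠ 1 := by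
    filter_upwards [self_mem_nhdsWithin] with s hs
    exact ne_of_lt (sq_phi_lt_one hmeas hnonneg hpos hs)
  have hlog1 : Tendsto (fun y : ℝ => Real.log y / (y - 1)) (nhdsWithin 1 {(1:ℝ)}ᶜ)
      (nhds 1) := by
    have hd : HasDerivAt Real.log 1 1 := by
      simpa using Real.hasDerivAt_log one_ne_zero
    have := hasDerivAt_iff_tendsto_slope.mp hd
    refine this.congr fun y => ?_
    simp [slope_def_field]
  have hcomp : Tendsto (fun s : ℝ => Real.log (φ s) / (φ s - 1))
      (nhdsWithin 0 (Set.Ioi 0)) (nhds 1) := by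
    refine hlog1.comp (tendsto_nhdsWithin_iff.mpr ⟨hφ1, ?_⟩)
    filter_upwards [hne] with s hs using hs
  have hratio : Tendsto (fun s : ℝ => (φ s - 1) / s) (nhdsWithin 0 (Set.Ioi 0)) (nhds (-1)) := by
    have := (sq_tendsto_ratio hmeas hnonneg hint hmean).neg
    refine this.congr fun s => ?_
    rw [← neg_div, neg_sub]
  have hmul := hcomp.mul hratio
  rw [one_mul] at hmul
  refine hmul.congr' ?_
  filter_upwards [self_mem_nhdsWithin, hne] with s hs hs1
  replace hs : 0 < s := hs
  have hb : φ s - 1 ≠ 0 := sub_ne_zero.mpr hs1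
  rw [div_mul_div_comm, mul_comm (φ s - 1) s, mul_div_mul_right _ _ hb]

end SQAux


lemma sq_gauss (m : ℕ) : (∑ i ∈ Finset.Icc 1 m, (i:ℝ)) = m*(m+1)/2 := by
  induction m with
  | zero => simp
  | succ n ih =>
    rw [Finset.sum_Icc_succ_top (by omega : 1 ≤ n + 1), ih]
    push_cast
    ring

/-- For the stationary queue length `Q ρ` with tail
`P(Q_ρ ≥ k) = ((1 - 𝔼 e^{-kÃ/ρ})/(k/ρ)) ∏_{i=1}^{k-1} 𝔼 e^{-iÃ/ρ}`, where `Ã ≥ 0`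
has mean 1 and `P(Ã > 0) > 0`, one has `P(Q_ρ/√ρ ≥ x) → e^{-x²/2}` for each `x > 0`. -/
theorem stationary_queue_rayleigh_limit
    {Ω : Type*} [MeasureSpace Ω] [IsProbabilityMeasure (ℙ : Measure Ω)]
    (Atil : Ω → ℝ) (hmeas : Measurable Atil) (hnonneg : ∀ ω, 0 ≤ Atil ω)
    (hint : Integrable Atil ℙ) (hmean : ∫ ω, Atil ω ∂ℙ = 1)
    (hpos : 0 < ℙ {ω | 0 < Atil ω})
    (Q : ℝ → Ω → ℕ) (hQmeas : ∀ ρ, Measurable (Q ρ))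
    (hQtail : ∀ ρ : ℝ, 0 < ρ → ∀ k : ℕ, 1 ≤ k →
      (ℙ {ω | k ≤ Q ρ ω}).toReal
        = ((1 - ∫ ω, Real.exp (-(k : ℝ) * Atil ω / ρ) ∂ℙ) / ((k : ℝ) / ρ))
            * ∏ i ∈ Finset.Icc 1 (k - 1), ∫ ω, Real.exp (-(i : ℝ) * Atil ω / ρ) ∂ℙ) :
    ∀ x : ℝ, 0 < x →
      Tendsto (fun ρ : ℝ => (ℙ {ω | x ≤ (Q ρ ω : ℝ) / Real.sqrt ρ}).toReal)
        atTop (nhds (Real.exp (-x ^ 2 / 2))) := by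
  intro x hx
  have hlog := sq_tendsto_log hmeas hnonneg hint hmean hpos
  set k : ℝ → ℕ := fun ρ => ⌈x * Real.sqrt ρ⌉₊ with hkdef
  have hsqrt : Tendsto Real.sqrt atTop atTop := by
    apply tendsto_atTop_atTop.mpr
    intro b
    refine ⟨max (b^2) 0, fun a ha => ?_⟩
    rcases le_total b 0 with hb | hb
    · exact hb.trans (Real.sqrt_nonneg a)
    · have h2 : b^2 ≤ a := le_trans (le_max_left _ _) ha
      calc b = Real.sqrt (b^2) := (Real.sqrt_sq hb).symm
        _ ≤ Real.sqrt a := Real.sqrt_le_sqrt h2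
  have hinv : Tendsto (fun ρ : ℝ => (Real.sqrt ρ)⁻¹) atTop (nhds 0) :=
    hsqrt.inv_tendsto_atTop
  have ha : Tendsto (fun ρ : ℝ => (k ρ : ℝ) / Real.sqrt ρ) atTop (nhds x) := by
    have hup : Tendsto (fun ρ : ℝ => x + (Real.sqrt ρ)⁻¹) atTop (nhds x) := by
      have := (tendsto_const_nhds : Tendsto (fun _ : ℝ => x) atTop (nhds x)).add hinv
      simpa using this
    refine tendsto_of_tendsto_of_tendsto_of_le_of_le'
      (tendsto_const_nhds : Tendsto (fun _ : ℝ => x) atTop (nhds x)) hup ?_ ?_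
    · filter_upwards [eventually_ge_atTop (1:ℝ)] with ρ hρ1
      have hρ : (0:ℝ) < ρ := lt_of_lt_of_le one_pos hρ1
      have hsρ : 0 < Real.sqrt ρ := Real.sqrt_pos.2 hρ
      exact (le_div_iff₀ hsρ).2 (Nat.le_ceil _)
    · filter_upwards [eventually_ge_atTop (1:ℝ)] with ρ hρ1
      have hρ : (0:ℝ) < ρ := lt_of_lt_of_le one_pos hρ1
      have hsρ : 0 < Real.sqrt ρ := Real.sqrt_pos.2 hρ
      have hku : (k ρ : ℝ) < x * Real.sqrt ρ + 1 := Nat.ceil_lt_add_one (by positivity)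
      rw [div_le_iff₀ hsρ]
      have : (x + (Real.sqrt ρ)⁻¹) * Real.sqrt ρ = x * Real.sqrt ρ + 1 := by
        field_simp
      rw [this]
      exact hku.le
  have hb : Tendsto (fun ρ : ℝ => ((k ρ : ℝ) - 1) / Real.sqrt ρ) atTop (nhds x) := by
    have := ha.sub hinv
    rw [sub_zero] at this
    refine this.congr fun ρ => ?_
    rw [sub_div, one_div]
  have hc1 : Tendsto (fun ρ : ℝ => (k ρ : ℝ) / ρ) atTop (nhds 0) := by
    have := ha.mul hinv
    rw [mul_zero] at this
    refine this.congr' ?_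
    filter_upwards [eventually_ge_atTop (1:ℝ)] with ρ hρ1
    have hρ : (0:ℝ) < ρ := lt_of_lt_of_le one_pos hρ1
    have hss : Real.sqrt ρ * Real.sqrt ρ = ρ := Real.mul_self_sqrt hρ.le
    rw [← div_eq_mul_inv, div_div, hss]
  have hT : Tendsto (fun ρ : ℝ => (k ρ : ℝ) * ((k ρ : ℝ) - 1) / (2 * ρ)) atTop
      (nhds (x^2/2)) := by
    have hprod := (ha.mul hb).div_const 2
    rw [show x * x / 2 = x^2/2 by ring] at hprod
    refine hprod.congr' ?_
    filter_upwards [eventually_ge_atTop (1:ℝ)] with ρ hρ1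
    have hρ : (0:ℝ) < ρ := lt_of_lt_of_le one_pos hρ1
    have hss : Real.sqrt ρ * Real.sqrt ρ = ρ := Real.mul_self_sqrt hρ.le
    rw [div_mul_div_comm, hss, div_div, mul_comm ρ 2]
  have hsum_eq : ∀ ρ : ℝ, 0 < ρ → 1 ≤ k ρ →
      (∑ i ∈ Finset.Icc 1 (k ρ - 1), (i:ℝ)/ρ)
        = (k ρ : ℝ) * ((k ρ : ℝ) - 1) / (2 * ρ) := by
    intro ρ hρ hk1
    rw [← Finset.sum_div, sq_gauss]
    have hc : ((k ρ - 1 : ℕ):ℝ) = (k ρ:ℝ) - 1 := by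
      rw [Nat.cast_sub hk1, Nat.cast_one]
    rw [hc]
    have : (k ρ:ℝ) - 1 + 1 = (k ρ:ℝ) := by ring
    rw [this]
    field_simp
  have hS : Tendsto (fun ρ : ℝ => ∑ i ∈ Finset.Icc 1 (k ρ - 1),
      Real.log (∫ ω, Real.exp (-((i:ℝ)/ρ) * Atil ω) ∂ℙ)) atTop (nhds (-x^2/2)) := by
    rw [Metric.tendsto_nhds]
    intro ε hε
    have hx2 : (0:ℝ) < x^2 + 4 := by positivity
    set ε₁ : ℝ := ε / (x^2 + 4) with hε₁def
    have hε₁ : 0 < ε₁ := by positivity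
    have hev := Metric.tendsto_nhds.mp hlog ε₁ hε₁
    obtain ⟨δ, hδ, hδsub⟩ := Metric.mem_nhdsWithin_iff.mp hev
    have hkey : ∀ s : ℝ, 0 < s → s < δ →
        |Real.log (∫ ω, Real.exp (-s * Atil ω) ∂ℙ) + s| ≤ ε₁ * s := by
      intro s hs hsδ
      have hmem : s ∈ Metric.ball (0:ℝ) δ ∩ Set.Ioi 0 :=
        ⟨by simpa [Real.dist_eq, abs_of_pos hs] using hsδ, hs⟩
      have hd := hδsub hmem
      simp only [Set.mem_setOf_eq, Real.dist_eq] at hd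
      set L := Real.log (∫ ω, Real.exp (-s * Atil ω) ∂ℙ) with hL
      have heq : L + s = s * (L / s - (-1)) := by
        rw [sub_neg_eq_add, mul_add, mul_one, ← mul_div_assoc,
          mul_div_cancel_left₀ _ hs.ne']
      rw [heq, abs_mul, abs_of_pos hs, mul_comm ε₁ s]
      exact mul_le_mul_of_nonneg_left hd.le hs.le
    have hev2 : ∀ᶠ ρ in atTop, (k ρ:ℝ)/ρ < δ := hc1.eventually_lt_const hδ
    have hev3 := Metric.tendsto_nhds.mp hT ε₁ hε₁
    have hev4 : ∀ᶠ ρ in atTop, (k ρ:ℝ) * ((k ρ:ℝ) - 1) / (2*ρ) < x^2/2 + 1 :=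
      hT.eventually_lt_const (by linarith)
    filter_upwards [eventually_ge_atTop (1:ℝ), hev2, hev3, hev4] with ρ hρ1 hδρ hTd hTb
    have hρ : (0:ℝ) < ρ := lt_of_lt_of_le one_pos hρ1
    have hsρ : 0 < Real.sqrt ρ := Real.sqrt_pos.2 hρ
    have hk1 : 1 ≤ k ρ := Nat.ceil_pos.mpr (by positivity)
    have hsum := hsum_eq ρ hρ hk1
    set S := ∑ i ∈ Finset.Icc 1 (k ρ - 1),
      Real.log (∫ ω, Real.exp (-((i:ℝ)/ρ) * Atil ω) ∂ℙ) with hSdef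
    set T := (k ρ:ℝ) * ((k ρ:ℝ) - 1) / (2*ρ) with hTdef
    have hstep : |S + T| ≤ ε₁ * T := by
      rw [← hsum, ← Finset.sum_add_distrib]
      calc |∑ i ∈ Finset.Icc 1 (k ρ - 1),
            (Real.log (∫ ω, Real.exp (-((i:ℝ)/ρ) * Atil ω) ∂ℙ) + (i:ℝ)/ρ)|
          ≤ ∑ i ∈ Finset.Icc 1 (k ρ - 1),
            |Real.log (∫ ω, Real.exp (-((i:ℝ)/ρ) * Atil ω) ∂ℙ) + (i:ℝ)/ρ| :=
            Finset.abs_sum_le_sum_abs _ _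
        _ ≤ ∑ i ∈ Finset.Icc 1 (k ρ - 1), ε₁ * ((i:ℝ)/ρ) := by
            apply Finset.sum_le_sum
            intro i hi
            obtain ⟨hi1, hi2⟩ := Finset.mem_Icc.mp hi
            have hi1' : (1:ℝ) ≤ (i:ℝ) := by exact_mod_cast hi1
            have hipos : (0:ℝ) < (i:ℝ)/ρ := by positivity
            have hile : (i:ℝ) ≤ (k ρ:ℝ) := by
              have : i ≤ k ρ := le_trans hi2 (Nat.sub_le _ _)
              exact_mod_cast this
            have hilt : (i:ℝ)/ρ < δ := by
              refine lt_of_le_of_lt ?_ hδρ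
              gcongr
            exact hkey _ hipos hilt
        _ = ε₁ * ∑ i ∈ Finset.Icc 1 (k ρ - 1), ((i:ℝ)/ρ) := by rw [Finset.mul_sum]
    have h5 : |T - x^2/2| < ε₁ := by simpa [Real.dist_eq] using hTd
    have h6 : |S + x^2/2| ≤ |S + T| + |T - x^2/2| := by
      have h := abs_add_le (S + T) (-(T - x^2/2))
      rw [abs_neg] at h
      have he : S + T + -(T - x^2/2) = S + x^2/2 := by ring
      rwa [he] at h
    have hmul1 : ε₁ * T ≤ ε₁ * (x^2/2 + 1) := mul_le_mul_of_nonneg_left hTb.le hε₁.le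
    have hsum2 : ε₁ * (x^2/2 + 1) + ε₁ = ε/2 := by
      rw [hε₁def]
      field_simp
      ring
    rw [Real.dist_eq, show S - (-x^2/2) = S + x^2/2 by ring]
    linarith
  have hposdiv : ∀ᶠ ρ : ℝ in atTop, (k ρ:ℝ)/ρ ∈ Set.Ioi (0:ℝ) := by
    filter_upwards [eventually_ge_atTop (1:ℝ)] with ρ hρ1
    have hρ : (0:ℝ) < ρ := lt_of_lt_of_le one_pos hρ1
    have hk1 : 1 ≤ k ρ := Nat.ceil_pos.mpr (by positivity)
    have : (0:ℝ) < (k ρ:ℝ) := by exact_mod_cast hk1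
    exact div_pos this hρ
  have hF1 : Tendsto (fun ρ : ℝ =>
      (1 - ∫ ω, Real.exp (-((k ρ:ℝ)/ρ) * Atil ω) ∂ℙ) / ((k ρ:ℝ)/ρ)) atTop (nhds 1) :=
    (sq_tendsto_ratio hmeas hnonneg hint hmean).comp
      (tendsto_nhdsWithin_iff.mpr ⟨hc1, hposdiv⟩)
  have hExp : Tendsto (fun ρ : ℝ => Real.exp (∑ i ∈ Finset.Icc 1 (k ρ - 1),
      Real.log (∫ ω, Real.exp (-((i:ℝ)/ρ) * Atil ω) ∂ℙ))) atTop
      (nhds (Real.exp (-x^2/2))) :=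
    (Real.continuous_exp.tendsto _).comp hS
  have hfinal := hF1.mul hExp
  rw [one_mul] at hfinal
  refine hfinal.congr' ?_
  filter_upwards [eventually_ge_atTop (1:ℝ)] with ρ hρ1
  have hρ : (0:ℝ) < ρ := lt_of_lt_of_le one_pos hρ1
  have hsρ : 0 < Real.sqrt ρ := Real.sqrt_pos.2 hρ
  have hk1 : 1 ≤ k ρ := Nat.ceil_pos.mpr (by positivity)
  have hset : {ω | x ≤ (Q ρ ω : ℝ) / Real.sqrt ρ} = {ω | k ρ ≤ Q ρ ω} := by
    ext ω
    simp only [Set.mem_setOf_eq]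
    rw [le_div_iff₀ hsρ, ← Nat.ceil_le]
  have harg : ∀ c : ℝ, (fun ω => Real.exp (-c * Atil ω / ρ))
      = fun ω => Real.exp (-(c/ρ) * Atil ω) := by
    intro c
    funext ω
    congr 1
    ring
  symm
  calc (ℙ {ω | x ≤ (Q ρ ω : ℝ) / Real.sqrt ρ}).toReal
      = (ℙ {ω | k ρ ≤ Q ρ ω}).toReal := by rw [hset]
    _ = ((1 - ∫ ω, Real.exp (-(k ρ : ℝ) * Atil ω / ρ) ∂ℙ) / ((k ρ : ℝ) / ρ))
          * ∏ i ∈ Finset.Icc 1 (k ρ - 1), ∫ ω, Real.exp (-(i : ℝ) * Atil ω / ρ) ∂ℙ :=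
        hQtail ρ hρ (k ρ) hk1
    _ = ((1 - ∫ ω, Real.exp (-((k ρ:ℝ)/ρ) * Atil ω) ∂ℙ) / ((k ρ:ℝ)/ρ))
          * Real.exp (∑ i ∈ Finset.Icc 1 (k ρ - 1),
              Real.log (∫ ω, Real.exp (-((i:ℝ)/ρ) * Atil ω) ∂ℙ)) := by
        simp only [harg]
        rw [Finset.prod_congr rfl (fun i _ => (Real.exp_log
          (sq_phi_pos hmeas hnonneg (div_nonneg (Nat.cast_nonneg i) hρ.le))).symm),
          ← Real.exp_sum]
end

section
/- Let à have mean 1 and P(Ã > 0) > 0, μ = μ(ρ), and consider i exponentials with rate 1/ρ relative to Ã: define for i ≥ 1 the ratio R_i(ρ) := [i·E[(1 − e^{−Ã/ρ}) e^{−(i−1)Ã/ρ}]] / E[1 − e^{−iÃ/ρ}]. Then for any 0 < m < M, both min_{m√ρ ≤ i ≤ M√ρ} R_i(ρ) and max_{m√ρ ≤ i ≤ M√ρ} R_i(ρ) converge to 1 as ρ → ∞. -/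
open MeasureTheory ProbabilityTheory Filter Topology

set_option maxHeartbeats 1000000

private lemma aux_sqrt_tendsto : Tendsto Real.sqrt atTop atTop := by
  rw [tendsto_atTop_atTop]
  intro b
  refine ⟨max 0 b ^ 2, fun x hx => le_trans (le_max_right 0 b) ?_⟩
  rw [show max 0 b = Real.sqrt (max 0 b ^ 2) from (Real.sqrt_sq (le_max_left 0 b)).symm]
  exact Real.sqrt_le_sqrt hx

private lemma aux_one_sub_exp_le (x : ℝ) : 1 - Real.exp (-x) ≤ x := by
  have := Real.add_one_le_exp (-x)
  linarith

private lemma aux_le_one_sub_exp (x : ℝ) :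
    x * Real.exp (-x) ≤ 1 - Real.exp (-x) := by
  have h := Real.add_one_le_exp x
  have hp := (Real.exp_pos (-x)).le
  have hm : Real.exp x * Real.exp (-x) = 1 := by
    rw [← Real.exp_add]; simp
  nlinarith

/-- For `Ã ≥ 0` with mean 1 and `P(Ã > 0) > 0`, the ratios
`R_i(ρ) = i·𝔼[(1 - e^{-Ã/ρ}) e^{-(i-1)Ã/ρ}] / 𝔼[1 - e^{-iÃ/ρ}]` converge to 1
uniformly over `m√ρ ≤ i ≤ M√ρ` as `ρ → ∞` (hence both the min and the max over
that range tend to 1). -/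
theorem unique_service_completion_limit
    {Ω : Type*} [MeasureSpace Ω] [IsProbabilityMeasure (ℙ : Measure Ω)]
    (Atil : Ω → ℝ) (hmeas : Measurable Atil) (hnonneg : ∀ ω, 0 ≤ Atil ω)
    (hint : Integrable Atil ℙ) (hmean : ∫ ω, Atil ω ∂ℙ = 1)
    (hpos : 0 < ℙ {ω | 0 < Atil ω})
    (R : ℕ → ℝ → ℝ)
    (hR : ∀ (i : ℕ) (ρ : ℝ), 0 < ρ → 1 ≤ i →
      R i ρ = ((i : ℝ) * ∫ ω, (1 - Real.exp (-Atil ω / ρ))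
                  * Real.exp (-((i : ℝ) - 1) * Atil ω / ρ) ∂ℙ)
              / ∫ ω, (1 - Real.exp (-(i : ℝ) * Atil ω / ρ)) ∂ℙ)
    (m M : ℝ) (hm : 0 < m) (hmM : m < M) :
    ∀ ε : ℝ, 0 < ε → ∀ᶠ ρ : ℝ in atTop, ∀ i : ℕ,
      m * Real.sqrt ρ ≤ (i : ℝ) → (i : ℝ) ≤ M * Real.sqrt ρ →
        |R i ρ - 1| < ε := by
  intro ε hε
  have hM : 0 < M := hm.trans hmM
  -- measurability of the `g` integrand
  have hmE : ∀ ρ : ℝ, Measurable fun ω => Atil ω * Real.exp (-M * Atil ω / Real.sqrt ρ) :=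
    fun ρ => hmeas.mul ((( hmeas.const_mul (-M)).div_const _).exp)
  -- the exponent is nonpositive
  have hexp_le_one : ∀ (ρ : ℝ) (ω : Ω), Real.exp (-M * Atil ω / Real.sqrt ρ) ≤ 1 := by
    intro ρ ω
    have h1 : -M * Atil ω / Real.sqrt ρ ≤ 0 :=
      div_nonpos_of_nonpos_of_nonneg (by nlinarith [hnonneg ω]) (Real.sqrt_nonneg ρ)
    calc Real.exp (-M * Atil ω / Real.sqrt ρ) ≤ Real.exp 0 := Real.exp_le_exp.mpr h1
    _ = 1 := Real.exp_zero
  -- dominated convergence: g ρ → 1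
  have hg_tend : Tendsto (fun ρ : ℝ => ∫ ω, Atil ω * Real.exp (-M * Atil ω / Real.sqrt ρ) ∂ℙ)
      atTop (𝓝 1) := by
    have h := MeasureTheory.tendsto_integral_filter_of_dominated_convergence
      (μ := (ℙ : Measure Ω)) (l := atTop)
      (F := fun (ρ : ℝ) ω => Atil ω * Real.exp (-M * Atil ω / Real.sqrt ρ))
      (f := Atil) (bound := Atil)
      (Eventually.of_forall fun ρ => (hmE ρ).aestronglyMeasurable)
      (Eventually.of_forall fun ρ => Eventually.of_forall fun ω => by
        have h1 := hexp_le_one ρ ω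
        have h2 := (Real.exp_pos (-M * Atil ω / Real.sqrt ρ)).le
        have := hnonneg ω
        rw [Real.norm_eq_abs, abs_of_nonneg (by positivity)]
        nlinarith)
      hint
      (Eventually.of_forall fun ω => by
        have h1 : Tendsto (fun ρ : ℝ => -M * Atil ω / Real.sqrt ρ) atTop (𝓝 0) :=
          tendsto_const_nhds.div_atTop aux_sqrt_tendsto
        have h2 : Tendsto (fun ρ : ℝ => Real.exp (-M * Atil ω / Real.sqrt ρ)) atTop (𝓝 1) := by
          have := (Real.continuous_exp.tendsto 0).comp h1
          simpa [Function.comp_def] using this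
        have := tendsto_const_nhds.mul h2 (f := fun _ : ℝ => Atil ω)
        simpa using this)
    rwa [hmean] at h
  set δ : ℝ := ε / (1 + ε) with hδdef
  have hδ0 : 0 < δ := div_pos hε (by linarith)
  have hδ1 : δ < 1 := by rw [hδdef, div_lt_one (by linarith)]; linarith
  have hδε : δ < ε := by rw [hδdef, div_lt_iff₀ (by linarith)]; nlinarith
  have hev : ∀ᶠ ρ : ℝ in atTop,
      1 - δ < ∫ ω, Atil ω * Real.exp (-M * Atil ω / Real.sqrt ρ) ∂ℙ :=
    hg_tend.eventually (eventually_gt_nhds (by linarith))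
  filter_upwards [hev, eventually_ge_atTop (1 : ℝ), eventually_ge_atTop (1 / m ^ 2)]
    with ρ hgρ hρ1 hρm
  intro i hi_lo hi_hi
  have hρ0 : 0 < ρ := lt_of_lt_of_le one_pos hρ1
  have hs0 : 0 < Real.sqrt ρ := Real.sqrt_pos.mpr hρ0
  have hss : Real.sqrt ρ * Real.sqrt ρ = ρ := Real.mul_self_sqrt hρ0.le
  -- i ≥ 1
  have hsqm : 1 / m ≤ Real.sqrt ρ := by
    have h1 : Real.sqrt (1 / m ^ 2) ≤ Real.sqrt ρ := Real.sqrt_le_sqrt hρm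
    rwa [show (1 / m ^ 2 : ℝ) = (1 / m) ^ 2 by ring,
      Real.sqrt_sq (by positivity)] at h1
  have hi1R : (1 : ℝ) ≤ (i : ℝ) := by
    have : (1 : ℝ) ≤ m * Real.sqrt ρ := by
      rw [show (1 : ℝ) = m * (1 / m) by field_simp]
      exact mul_le_mul_of_nonneg_left hsqm hm.le
    linarith
  have hi1 : 1 ≤ i := by exact_mod_cast hi1R
  rw [hR i ρ hρ0 hi1]
  -- notation
  set G : ℝ := ∫ ω, Atil ω * Real.exp (-M * Atil ω / Real.sqrt ρ) ∂ℙ with hGdef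
  have hG0 : 0 < G := lt_of_lt_of_le (by linarith) hgρ.le
  set N : ℝ := ∫ ω, (1 - Real.exp (-Atil ω / ρ))
      * Real.exp (-((i : ℝ) - 1) * Atil ω / ρ) ∂ℙ with hNdef
  set D : ℝ := ∫ ω, (1 - Real.exp (-(i : ℝ) * Atil ω / ρ)) ∂ℙ with hDdef
  -- key exponent comparison : i·a/ρ ≤ M·a/√ρ
  have hkey : ∀ ω, (i : ℝ) * Atil ω / ρ ≤ M * Atil ω / Real.sqrt ρ := by
    intro ω
    rw [div_le_div_iff₀ hρ0 hs0]
    have ha := hnonneg ω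
    have h2 : (i : ℝ) * (Atil ω * Real.sqrt ρ) ≤ M * Real.sqrt ρ * (Atil ω * Real.sqrt ρ) :=
      mul_le_mul_of_nonneg_right hi_hi (mul_nonneg ha hs0.le)
    have h3 : M * Real.sqrt ρ * (Atil ω * Real.sqrt ρ) = M * Atil ω * ρ := by
      linear_combination (M * Atil ω) * hss
    nlinarith [h2, h3]
  have hEle : ∀ ω, Real.exp (-M * Atil ω / Real.sqrt ρ)
      ≤ Real.exp (-((i : ℝ) * Atil ω / ρ)) := by
    intro ω
    apply Real.exp_le_exp.mpr
    have := hkey ω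
    rw [neg_mul, neg_div]
    linarith
  -- integrability facts
  have hIg : Integrable (fun ω => Atil ω * Real.exp (-M * Atil ω / Real.sqrt ρ)) ℙ := by
    apply hint.mono' (hmE ρ).aestronglyMeasurable
    refine Eventually.of_forall fun ω => ?_
    have h1 := hexp_le_one ρ ω
    have h2 := (Real.exp_pos (-M * Atil ω / Real.sqrt ρ)).le
    have := hnonneg ω
    rw [Real.norm_eq_abs, abs_of_nonneg (by positivity)]
    nlinarith
  have hmf1 : Measurable fun ω => (1 - Real.exp (-Atil ω / ρ))
      * Real.exp (-((i : ℝ) - 1) * Atil ω / ρ) :=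
    ((measurable_const.sub ((hmeas.neg.div_const ρ).exp)).mul
      ((( hmeas.const_mul _).div_const ρ).exp))
  have hIf1 : Integrable (fun ω => (1 - Real.exp (-Atil ω / ρ))
      * Real.exp (-((i : ℝ) - 1) * Atil ω / ρ)) ℙ := by
    apply (integrable_const (1 : ℝ)).mono' hmf1.aestronglyMeasurable
    refine Eventually.of_forall fun ω => ?_
    have ha := hnonneg ω
    have h1 : Real.exp (-Atil ω / ρ) ≤ 1 :=
      Real.exp_le_one_iff.mpr (div_nonpos_of_nonpos_of_nonneg (neg_nonpos.mpr ha) hρ0.le)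
    have h2 : Real.exp (-((i : ℝ) - 1) * Atil ω / ρ) ≤ 1 := by
      apply Real.exp_le_one_iff.mpr
      apply div_nonpos_of_nonpos_of_nonneg _ hρ0.le
      nlinarith [mul_nonneg (sub_nonneg.mpr hi1R) ha, mul_nonneg (le_trans zero_le_one hi1R) ha]
    have h3 := (Real.exp_pos (-Atil ω / ρ)).le
    have h4 := (Real.exp_pos (-((i : ℝ) - 1) * Atil ω / ρ)).le
    rw [Real.norm_eq_abs, abs_of_nonneg (by nlinarith)]
    nlinarith
  have hmf2 : Measurable fun ω => (1 - Real.exp (-(i : ℝ) * Atil ω / ρ)) :=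
    measurable_const.sub (((hmeas.const_mul _).div_const ρ).exp)
  have hIf2 : Integrable (fun ω => (1 - Real.exp (-(i : ℝ) * Atil ω / ρ))) ℙ := by
    apply (integrable_const (1 : ℝ)).mono' hmf2.aestronglyMeasurable
    refine Eventually.of_forall fun ω => ?_
    have ha := hnonneg ω
    have h1 : Real.exp (-(i : ℝ) * Atil ω / ρ) ≤ 1 := by
      apply Real.exp_le_one_iff.mpr
      apply div_nonpos_of_nonpos_of_nonneg _ hρ0.le
      nlinarith [mul_nonneg (sub_nonneg.mpr hi1R) ha, mul_nonneg (le_trans zero_le_one hi1R) ha]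
    have h3 := (Real.exp_pos (-(i : ℝ) * Atil ω / ρ)).le
    rw [Real.norm_eq_abs, abs_of_nonneg (by nlinarith)]
    nlinarith
  -- N ≤ 1/ρ
  have hN_ub : N ≤ 1 / ρ := by
    have hpt : ∀ ω, (1 - Real.exp (-Atil ω / ρ)) * Real.exp (-((i : ℝ) - 1) * Atil ω / ρ)
        ≤ Atil ω / ρ := by
      intro ω
      have ha := hnonneg ω
      have h1 : 1 - Real.exp (-(Atil ω / ρ)) ≤ Atil ω / ρ := aux_one_sub_exp_le _
      rw [← neg_div] at h1
      have h2 : Real.exp (-((i : ℝ) - 1) * Atil ω / ρ) ≤ 1 := by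
        apply Real.exp_le_one_iff.mpr
        apply div_nonpos_of_nonpos_of_nonneg _ hρ0.le
        nlinarith [mul_nonneg (sub_nonneg.mpr hi1R) ha]
      have h0 : Real.exp (-Atil ω / ρ) ≤ 1 :=
        Real.exp_le_one_iff.mpr (div_nonpos_of_nonpos_of_nonneg (neg_nonpos.mpr ha) hρ0.le)
      have h4 := (Real.exp_pos (-((i : ℝ) - 1) * Atil ω / ρ)).le
      nlinarith [mul_le_mul_of_nonneg_left h2
        (by linarith : (0:ℝ) ≤ 1 - Real.exp (-Atil ω / ρ))]
    have := integral_mono hIf1 (hint.div_const ρ) hpt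
    rwa [integral_div, hmean] at this
  -- G/ρ ≤ N
  have hN_lb : G / ρ ≤ N := by
    have hpt : ∀ ω, Atil ω * Real.exp (-M * Atil ω / Real.sqrt ρ) / ρ
        ≤ (1 - Real.exp (-Atil ω / ρ)) * Real.exp (-((i : ℝ) - 1) * Atil ω / ρ) := by
      intro ω
      have ha := hnonneg ω
      have hsplit : Real.exp (-((i : ℝ) * Atil ω / ρ))
          = Real.exp (-Atil ω / ρ) * Real.exp (-((i : ℝ) - 1) * Atil ω / ρ) := by
        rw [← Real.exp_add]
        congr 1
        field_simp
        ring
      have h1 : (Atil ω / ρ) * Real.exp (-(Atil ω / ρ)) ≤ 1 - Real.exp (-(Atil ω / ρ)) :=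
        aux_le_one_sub_exp _
      rw [← neg_div] at h1
      have hE := hEle ω
      have h4 := (Real.exp_pos (-((i : ℝ) - 1) * Atil ω / ρ)).le
      have h5 := (Real.exp_pos (-Atil ω / ρ)).le
      have haρ : 0 ≤ Atil ω / ρ := by positivity
      calc Atil ω * Real.exp (-M * Atil ω / Real.sqrt ρ) / ρ
          = (Atil ω / ρ) * Real.exp (-M * Atil ω / Real.sqrt ρ) := by ring
        _ ≤ (Atil ω / ρ) * Real.exp (-((i : ℝ) * Atil ω / ρ)) :=
            mul_le_mul_of_nonneg_left hE haρ
        _ = ((Atil ω / ρ) * Real.exp (-Atil ω / ρ)) * Real.exp (-((i : ℝ) - 1) * Atil ω / ρ) := by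
            rw [hsplit]; ring
        _ ≤ (1 - Real.exp (-Atil ω / ρ)) * Real.exp (-((i : ℝ) - 1) * Atil ω / ρ) :=
            mul_le_mul_of_nonneg_right h1 h4
    have := integral_mono (hIg.div_const ρ) hIf1 hpt
    rwa [integral_div] at this
  -- D ≤ i/ρ
  have hD_ub : D ≤ (i : ℝ) / ρ := by
    have hpt : ∀ ω, (1 - Real.exp (-(i : ℝ) * Atil ω / ρ)) ≤ (i : ℝ) * Atil ω / ρ := by
      intro ω
      have h1 : 1 - Real.exp (-((i : ℝ) * Atil ω / ρ)) ≤ (i : ℝ) * Atil ω / ρ :=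
        aux_one_sub_exp_le _
      rw [show -((i : ℝ) * Atil ω / ρ) = -(i : ℝ) * Atil ω / ρ by ring] at h1
      exact h1
    have := integral_mono hIf2 ((hint.const_mul (i : ℝ)).div_const ρ) hpt
    rw [integral_div, integral_const_mul, hmean, mul_one] at this
    exact this
  -- i·G/ρ ≤ D
  have hD_lb : (i : ℝ) * G / ρ ≤ D := by
    have hpt : ∀ ω, (i : ℝ) * (Atil ω * Real.exp (-M * Atil ω / Real.sqrt ρ)) / ρ
        ≤ (1 - Real.exp (-(i : ℝ) * Atil ω / ρ)) := by
      intro ω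
      have ha := hnonneg ω
      have h1 : ((i : ℝ) * Atil ω / ρ) * Real.exp (-((i : ℝ) * Atil ω / ρ))
          ≤ 1 - Real.exp (-((i : ℝ) * Atil ω / ρ)) := aux_le_one_sub_exp _
      have hE := hEle ω
      have hq : 0 ≤ (i : ℝ) * Atil ω / ρ := by positivity
      have h2 : ((i : ℝ) * Atil ω / ρ) * Real.exp (-M * Atil ω / Real.sqrt ρ)
          ≤ ((i : ℝ) * Atil ω / ρ) * Real.exp (-((i : ℝ) * Atil ω / ρ)) :=
        mul_le_mul_of_nonneg_left hE hq
      rw [show -(i : ℝ) * Atil ω / ρ = -((i : ℝ) * Atil ω / ρ) by ring]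
      calc (i : ℝ) * (Atil ω * Real.exp (-M * Atil ω / Real.sqrt ρ)) / ρ
          = ((i : ℝ) * Atil ω / ρ) * Real.exp (-M * Atil ω / Real.sqrt ρ) := by ring
        _ ≤ ((i : ℝ) * Atil ω / ρ) * Real.exp (-((i : ℝ) * Atil ω / ρ)) := h2
        _ ≤ 1 - Real.exp (-((i : ℝ) * Atil ω / ρ)) := h1
    have := integral_mono ((hIg.const_mul (i : ℝ)).div_const ρ) hIf2 hpt
    rwa [integral_div, integral_const_mul] at this
  -- assemble
  have hD0 : 0 < D := lt_of_lt_of_le (by positivity) hD_lb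
  have hRlo : G ≤ (i : ℝ) * N / D := by
    rw [le_div_iff₀ hD0]
    have h1 : G * D ≤ G * ((i : ℝ) / ρ) := mul_le_mul_of_nonneg_left hD_ub hG0.le
    have h2 : (i : ℝ) * (G / ρ) ≤ (i : ℝ) * N :=
      mul_le_mul_of_nonneg_left hN_lb (Nat.cast_nonneg i)
    have h3 : G * ((i : ℝ) / ρ) = (i : ℝ) * (G / ρ) := by ring
    linarith
  have hRhi : (i : ℝ) * N / D ≤ 1 / G := by
    rw [div_le_div_iff₀ hD0 hG0]
    have h1 : (i : ℝ) * N ≤ (i : ℝ) * (1 / ρ) :=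
      mul_le_mul_of_nonneg_left hN_ub (Nat.cast_nonneg i)
    have h2 : (i : ℝ) * N * G ≤ ((i : ℝ) * (1 / ρ)) * G := mul_le_mul_of_nonneg_right h1 hG0.le
    have h3 : ((i : ℝ) * (1 / ρ)) * G = (i : ℝ) * G / ρ := by ring
    linarith
  rw [abs_sub_lt_iff]
  constructor
  · have hinv : 1 / G < 1 + ε := by
      rw [div_lt_iff₀ hG0]
      have hc : (1 + ε) * (ε / (1 + ε)) = ε := by field_simp
      nlinarith
    linarith
  · linarith
end

section
/- Every twice-differentiable probability density f on (0,∞) with finite mean solving the ODE f''(x) + x f'(x) + f(x) = 0 equals f(x) = √(2/π) e^{−x²/2}. More precisely: the general solution of f'' + x f' + f = 0 on (0,∞) is C₁ e^{−x²/2} + C₂ D(x/√2) where D(x) = e^{−x²}∫_0^x e^{u²}du is the Dawson function; since D(x) ~ 1/(2x) as x → ∞, any solution that is integrable with finite first moment over (0,∞) must have C₂ = 0, and normalization forces C₁ = √(2/π). -/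
open MeasureTheory

/-- A function with zero derivative on `Ioi 0` is constant there. -/
lemma const_of_deriv_zero_Ioi (g : ℝ → ℝ)
    (hg : ∀ x ∈ Set.Ioi (0:ℝ), HasDerivAt g 0 x) :
    ∀ x ∈ Set.Ioi (0:ℝ), ∀ y ∈ Set.Ioi (0:ℝ), g x = g y := by
  intro x hx y hy
  refine (convex_Ioi (0:ℝ)).is_const_of_fderivWithin_eq_zero
    (fun z hz => (hg z hz).differentiableAt.differentiableWithinAt) (fun z hz => ?_) hx hy
  rw [fderivWithin_of_isOpen isOpen_Ioi hz, (hg z hz).hasFDerivAt.fderiv]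
  ext
  simp

/-- Any probability density `f` on `(0,∞)` with finite mean solving
`f'' + x f' + f = 0` on `(0,∞)` equals `√(2/π) e^{-x²/2}`. -/
theorem ode_density_unique
    (f f' f'' : ℝ → ℝ)
    (hderiv1 : ∀ x ∈ Set.Ioi (0 : ℝ), HasDerivAt f (f' x) x)
    (hderiv2 : ∀ x ∈ Set.Ioi (0 : ℝ), HasDerivAt f' (f'' x) x)
    (hODE : ∀ x ∈ Set.Ioi (0 : ℝ), f'' x + x * f' x + f x = 0)
    (hnonneg : ∀ x ∈ Set.Ioi (0 : ℝ), 0 ≤ f x)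
    (hprob : ∫ x in Set.Ioi (0 : ℝ), f x = 1)
    (hint : IntegrableOn f (Set.Ioi 0) volume)
    (hmean : IntegrableOn (fun x => x * f x) (Set.Ioi 0) volume) :
    ∀ x ∈ Set.Ioi (0 : ℝ),
      f x = Real.sqrt (2 / Real.pi) * Real.exp (-x ^ 2 / 2) := by
  have h1mem : (1:ℝ) ∈ Set.Ioi (0:ℝ) := by norm_num
  -- g = f' + x f has zero derivative, hence constant c
  have hg_deriv : ∀ x ∈ Set.Ioi (0:ℝ), HasDerivAt (fun x => f' x + x * f x) 0 x := by
    intro x hx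
    have h : HasDerivAt (fun x => f' x + x * f x) (f'' x + (1 * f x + x * f' x)) x := by
      exact (hderiv2 x hx).add ((hasDerivAt_id' x).mul (hderiv1 x hx))
    have h0 : f'' x + (1 * f x + x * f' x) = 0 := by
      have := hODE x hx; linarith
    rwa [h0] at h
  obtain ⟨c, hgc⟩ : ∃ c : ℝ, ∀ x ∈ Set.Ioi (0:ℝ), f' x + x * f x = c :=
    ⟨f' 1 + 1 * f 1, fun x hx =>
      const_of_deriv_zero_Ioi (fun x => f' x + x * f x) hg_deriv x hx 1 h1mem⟩
  obtain ⟨M, hM_def⟩ : ∃ M : ℝ, M = ∫ x in Set.Ioi (0:ℝ), x * f x := ⟨_, rfl⟩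
  have hM_nonneg : 0 ≤ M := by
    rw [hM_def]
    apply setIntegral_nonneg measurableSet_Ioi
    intro x hx
    exact mul_nonneg (le_of_lt hx) (hnonneg x hx)
  -- FTC: for T ≥ 1, f T = f 1 + c (T - 1) - I T with 0 ≤ I T ≤ M
  have key : ∀ T : ℝ, 1 ≤ T → ∃ I : ℝ, 0 ≤ I ∧ I ≤ M ∧ f T = f 1 + c * (T - 1) - I := by
    intro T hT
    have hIccsub : Set.Icc (1:ℝ) T ⊆ Set.Ioi 0 := fun z hz => lt_of_lt_of_le one_pos hz.1
    have hIocsub : Set.Ioc (1:ℝ) T ⊆ Set.Ioi 0 := fun z hz => lt_of_lt_of_le one_pos (le_of_lt hz.1)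
    have huIcc : Set.uIcc (1:ℝ) T = Set.Icc 1 T := Set.uIcc_of_le hT
    have hmean' : IntegrableOn (fun x => x * f x) (Set.Ioc 1 T) volume :=
      hmean.mono_set hIocsub
    have hintI : IntervalIntegrable f' volume 1 T := by
      rw [intervalIntegrable_iff_integrableOn_Ioc_of_le hT]
      apply IntegrableOn.congr_fun (f := fun x => c - x * f x)
      · exact (integrableOn_const measure_Ioc_lt_top.ne).sub hmean'
      · intro x hx
        show c - x * f x = f' x
        have := hgc x (hIocsub hx); linarith
      · exact measurableSet_Ioc
    have hftc : ∫ x in (1:ℝ)..T, f' x = f T - f 1 := by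
      apply intervalIntegral.integral_eq_sub_of_hasDerivAt
      · intro x hx
        exact hderiv1 x (hIccsub (huIcc ▸ hx))
      · exact hintI
    have hcongr : ∫ x in (1:ℝ)..T, f' x = ∫ x in (1:ℝ)..T, (c - x * f x) := by
      apply intervalIntegral.integral_congr
      intro x hx
      show f' x = c - x * f x
      have := hgc x (hIccsub (huIcc ▸ hx)); linarith
    have hsplit : ∫ x in (1:ℝ)..T, (c - x * f x)
        = c * (T - 1) - ∫ x in (1:ℝ)..T, x * f x := by
      rw [intervalIntegral.integral_sub intervalIntegrable_const
          ((intervalIntegrable_iff_integrableOn_Ioc_of_le hT).2 hmean')]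
      rw [intervalIntegral.integral_const, smul_eq_mul, mul_comm]
    refine ⟨∫ x in (1:ℝ)..T, x * f x, ?_, ?_, ?_⟩
    · rw [intervalIntegral.integral_of_le hT]
      apply setIntegral_nonneg measurableSet_Ioc
      intro x hx
      exact mul_nonneg (le_of_lt (hIocsub hx)) (hnonneg x (hIocsub hx))
    · rw [intervalIntegral.integral_of_le hT, hM_def]
      apply setIntegral_mono_set hmean
      · filter_upwards [ae_restrict_mem measurableSet_Ioi] with x hx
        exact mul_nonneg (le_of_lt hx) (hnonneg x hx)
      · exact Filter.Eventually.of_forall hIocsub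
    · rw [hcongr, hsplit] at hftc; linarith
  -- c = 0
  have hc0 : c = 0 := by
    rcases lt_trichotomy c 0 with hc | hc | hc
    · -- c < 0 : f becomes negative
      exfalso
      have hf1 : 0 ≤ f 1 := hnonneg 1 h1mem
      have hd : 0 ≤ (f 1 + 1) / (-c) := div_nonneg (by linarith) (by linarith)
      have hT1 : (1:ℝ) ≤ 1 + (f 1 + 1) / (-c) := by linarith
      obtain ⟨I, hI0, hIM, hfT⟩ := key (1 + (f 1 + 1) / (-c)) hT1
      have hcne : c ≠ 0 := ne_of_lt hc
      have hTm : c * (1 + (f 1 + 1) / (-c) - 1) = -(f 1 + 1) := by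
        field_simp
        ring
      rw [hTm] at hfT
      have hnn := hnonneg (1 + (f 1 + 1) / (-c)) (lt_of_lt_of_le one_pos hT1)
      linarith
    · exact hc
    · -- c > 0 : f ≥ 1 on a tail, contradicting integrability
      exfalso
      have hd : 0 ≤ (M + 1) / c := div_nonneg (by linarith) (le_of_lt hc)
      have hT01 : (1:ℝ) ≤ 1 + (M + 1) / c := by linarith
      have htail : ∀ T : ℝ, 1 + (M + 1) / c ≤ T → 1 ≤ f T := by
        intro T hT
        obtain ⟨I, hI0, hIM, hfT⟩ := key T (le_trans hT01 hT)
        have hf1 : 0 ≤ f 1 := hnonneg 1 h1mem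
        have h2 : (M + 1) / c ≤ T - 1 := by linarith
        have h1 : M + 1 ≤ c * (T - 1) := by
          rw [div_le_iff₀ hc] at h2
          nlinarith
        rw [hfT]; linarith
      have hsub : Set.Ioi (1 + (M + 1) / c) ⊆ Set.Ioi (0:ℝ) :=
        Set.Ioi_subset_Ioi (le_trans zero_le_one hT01)
      have hint' : IntegrableOn f (Set.Ioi (1 + (M + 1) / c)) volume := hint.mono_set hsub
      have hconst : IntegrableOn (fun _ : ℝ => (1:ℝ)) (Set.Ioi (1 + (M + 1) / c)) volume := by
        apply Integrable.mono' hint' aestronglyMeasurable_const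
        filter_upwards [ae_restrict_mem measurableSet_Ioi] with x hx
        rw [norm_one]
        exact htail x (le_of_lt hx)
      rw [integrableOn_const_iff] at hconst
      rcases hconst with h | h
      · norm_num at h
      · rw [Real.volume_Ioi] at h
        exact (lt_irrefl _ h).elim
  -- f x * exp(x²/2) is constant
  have hfe_deriv : ∀ x ∈ Set.Ioi (0:ℝ),
      HasDerivAt (fun x => f x * Real.exp (x^2/2)) 0 x := by
    intro x hx
    have hexp : HasDerivAt (fun x : ℝ => Real.exp (x^2/2)) (x * Real.exp (x^2/2)) x := by
      have h1 : HasDerivAt (fun x : ℝ => x^2/2) x x := by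
        simpa using (hasDerivAt_pow 2 x).div_const 2
      simpa [mul_comm] using h1.exp
    have h := (hderiv1 x hx).mul hexp
    have h0 : f' x * Real.exp (x^2/2) + f x * (x * Real.exp (x^2/2)) = 0 := by
      have hg := hgc x hx
      rw [hc0] at hg
      have hfx : f' x = -(x * f x) := by linarith
      rw [hfx]; ring
    rwa [h0] at h
  obtain ⟨A, hA⟩ : ∃ A : ℝ, ∀ x ∈ Set.Ioi (0:ℝ), f x * Real.exp (x^2/2) = A :=
    ⟨f 1 * Real.exp (1^2/2), fun x hx =>
      const_of_deriv_zero_Ioi _ hfe_deriv x hx 1 h1mem⟩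
  have hfeq : ∀ x ∈ Set.Ioi (0:ℝ), f x = A * Real.exp (-x^2/2) := by
    intro x hx
    rw [← hA x hx, mul_assoc, ← Real.exp_add,
      show x^2/2 + -x^2/2 = 0 by ring, Real.exp_zero, mul_one]
  -- normalization
  have hgauss : ∫ x in Set.Ioi (0:ℝ), Real.exp (-(1/2) * x^2)
      = Real.sqrt (Real.pi / (1/2)) / 2 := integral_gaussian_Ioi (1/2)
  have hcalc : ∫ x in Set.Ioi (0:ℝ), f x = A * (Real.sqrt (Real.pi / (1/2)) / 2) := by
    rw [← hgauss, ← integral_const_mul]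
    apply setIntegral_congr_fun measurableSet_Ioi
    intro x hx
    rw [hfeq x hx]
    congr 1
    ring
  have hprob' : A * (Real.sqrt (Real.pi / (1/2)) / 2) = 1 := hcalc.symm.trans hprob
  have hApos : Real.sqrt (Real.pi / (1/2)) = Real.sqrt (2 * Real.pi) := by
    norm_num [mul_comm]
  have hsq : Real.sqrt (2 / Real.pi) * Real.sqrt (2 * Real.pi) = 2 := by
    rw [← Real.sqrt_mul (by positivity)]
    rw [show (2 / Real.pi) * (2 * Real.pi) = 4 by field_simp; ring]
    rw [show (4:ℝ) = 2^2 by norm_num, Real.sqrt_sq (by norm_num)]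
  have hAval : A = Real.sqrt (2 / Real.pi) := by
    rw [hApos] at hprob'
    have hpos : (0:ℝ) < Real.sqrt (2 * Real.pi) := Real.sqrt_pos.2 (by positivity)
    have h : A * Real.sqrt (2 * Real.pi) = Real.sqrt (2 / Real.pi) * Real.sqrt (2 * Real.pi) := by
      rw [hsq]; linarith
    exact mul_right_cancel₀ (ne_of_gt hpos) h
  intro x hx
  rw [hfeq x hx, hAval]
end

section
/- Let ζ be Rayleigh (density x e^{−x²/2} on (0,∞)), ξ have density √(2/π) e^{−x²/2} on (0,∞), and η have density √(2/π) y² e^{−y²/2} on (0,∞), where conditionally on η = y, ξ is Uniform(0, y). Then for every measurable nonnegative function f, E[f(ζ)] = E[∫_ξ^η f(u) du] / E[η − ξ]; in particular for f(u) = 1_{u ≥ x} this yields P(ζ ≥ x) = e^{−x²/2} = E[(η − max(x, ξ))⁺] / E[η − ξ]. -/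
open MeasureTheory ProbabilityTheory Set Filter Topology ENNReal

lemma aux_hd (y : ℝ) : HasDerivAt (fun y : ℝ => -Real.exp (-y^2/2)) (y * Real.exp (-y^2/2)) y := by
  have h1 : HasDerivAt (fun y : ℝ => -y^2/2) (-y) y := by
    have := ((hasDerivAt_pow 2 y).neg.div_const 2)
    simpa [neg_div] using this
  have h2 := (Real.hasDerivAt_exp (-y^2/2)).comp y h1
  have h3 := h2.neg
  exact h3.congr_deriv (by ring)

lemma aux_tendsto : Tendsto (fun y : ℝ => -Real.exp (-y^2/2)) atTop (𝓝 0) := by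
  have h1 : Tendsto (fun y : ℝ => y^2/2) atTop atTop :=
    (tendsto_pow_atTop two_ne_zero).atTop_div_const two_pos
  have h2 : Tendsto (fun y : ℝ => -y^2/2) atTop atBot := by
    simp only [neg_div]
    exact tendsto_neg_atTop_atBot.comp h1
  have h3 := Real.tendsto_exp_atBot.comp h2
  have h4 := h3.neg
  simpa [Function.comp] using h4

lemma aux_integrableOn (u : ℝ) (hu : 0 ≤ u) :
    IntegrableOn (fun y : ℝ => y * Real.exp (-y^2/2)) (Ioi u) := by
  apply integrableOn_Ioi_deriv_of_nonneg' (fun x _ => aux_hd x) ?_ aux_tendsto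
  intro x hx
  have : (0:ℝ) < x := lt_of_le_of_lt hu hx
  positivity

lemma aux_intA (u : ℝ) (hu : 0 ≤ u) :
    ∫ y in Ioi u, y * Real.exp (-y^2/2) = Real.exp (-u^2/2) := by
  have := integral_Ioi_of_hasDerivAt_of_nonneg' (fun x _ => aux_hd x)
    (fun x hx => by have : (0:ℝ) < x := lt_of_le_of_lt hu hx; positivity) aux_tendsto
  simpa using this

lemma aux_lintA (u : ℝ) (hu : 0 ≤ u) :
    ∫⁻ y in Ioi u, ENNReal.ofReal (y * Real.exp (-y^2/2)) = ENNReal.ofReal (Real.exp (-u^2/2)) := by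
  rw [← ofReal_integral_eq_lintegral_ofReal (aux_integrableOn u hu)]
  · rw [aux_intA u hu]
  · filter_upwards [ae_restrict_mem measurableSet_Ioi] with y hy
    have : (0:ℝ) < y := lt_of_le_of_lt hu hy
    positivity

lemma aux_intB (x : ℝ) (hx : 0 ≤ x) :
    ∫ u in (0:ℝ)..x, u * Real.exp (-u^2/2) = 1 - Real.exp (-x^2/2) := by
  have := intervalIntegral.integral_eq_sub_of_hasDerivAt (f := fun y : ℝ => -Real.exp (-y^2/2))
    (f' := fun y : ℝ => y * Real.exp (-y^2/2)) (a := 0) (b := x)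
    (fun y _ => aux_hd y) ?_
  · rw [this]; simp [Real.exp_zero]; ring
  · apply Continuous.intervalIntegrable; continuity

noncomputable def rayD : ℝ → ℝ≥0∞ :=
  (Set.Ioi (0:ℝ)).indicator (fun u => ENNReal.ofReal (u * Real.exp (-u^2/2)))

lemma rayD_meas : Measurable rayD := by
  simp only [rayD]
  exact (ENNReal.measurable_ofReal.comp (by measurability)).indicator measurableSet_Ioi

lemma rayD_lintegral : ∫⁻ u, rayD u = 1 := by
  simp only [rayD]
  rw [lintegral_indicator measurableSet_Ioi]
  have := aux_lintA 0 le_rfl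
  norm_num at this
  rw [this]

lemma prob_gt {Ω : Type*} [MeasureSpace Ω] [IsProbabilityMeasure (ℙ : Measure Ω)] (ζ : Ω → ℝ)
    (hζtail : ∀ x : ℝ, 0 < x → ℙ {ω | x ≤ ζ ω} = ENNReal.ofReal (Real.exp (-x ^ 2 / 2)))
    (x : ℝ) (hx : 0 ≤ x) : ℙ {ω | x < ζ ω} = ENNReal.ofReal (Real.exp (-x ^ 2 / 2)) := by
  set s : ℕ → Set Ω := fun n => {ω | x + 1/(n+1) ≤ ζ ω} with hs
  have hmono : Monotone s := by
    intro n m hnm ω hω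
    have h1 : (1:ℝ)/(m+1) ≤ 1/(n+1) := by
      apply one_div_le_one_div_of_le (by positivity)
      exact_mod_cast by omega
    simp only [hs, Set.mem_setOf_eq] at hω ⊢
    linarith
  have hunion : (⋃ n, s n) = {ω | x < ζ ω} := by
    ext ω
    simp only [Set.mem_iUnion, Set.mem_setOf_eq, hs]
    constructor
    · rintro ⟨n, hn⟩
      have : (0:ℝ) < 1/(n+1) := by positivity
      linarith
    · intro h
      obtain ⟨n, hn⟩ := exists_nat_one_div_lt (sub_pos.mpr h)
      exact ⟨n, by linarith⟩
  have h1 := tendsto_measure_iUnion_atTop (μ := ℙ) hmono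
  rw [hunion] at h1
  have h2 : (ℙ ∘ s) = fun n : ℕ => ENNReal.ofReal (Real.exp (-(x + 1/(n+1))^2/2)) := by
    funext n
    exact hζtail _ (by positivity)
  rw [h2] at h1
  have h3 : Tendsto (fun n : ℕ => ENNReal.ofReal (Real.exp (-(x + 1/(n+1:ℝ))^2/2))) atTop
      (𝓝 (ENNReal.ofReal (Real.exp (-x^2/2)))) := by
    have hc : Continuous (fun t : ℝ => ENNReal.ofReal (Real.exp (-(x + t)^2/2))) := by
      apply ENNReal.continuous_ofReal.comp; continuity
    have := hc.continuousAt.tendsto.comp tendsto_one_div_add_atTop_nhds_zero_nat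
    simpa [Function.comp_def] using this
  exact tendsto_nhds_unique h1 h3

lemma map_zeta {Ω : Type*} [MeasureSpace Ω] [IsProbabilityMeasure (ℙ : Measure Ω)] (ζ : Ω → ℝ)
    (hζmeas : Measurable ζ) (hζnonneg : ∀ ω, 0 ≤ ζ ω)
    (hζtail : ∀ x : ℝ, 0 < x → ℙ {ω | x ≤ ζ ω} = ENNReal.ofReal (Real.exp (-x ^ 2 / 2))) :
    Measure.map ζ ℙ = volume.withDensity rayD := by
  haveI := Measure.isProbabilityMeasure_map hζmeas.aemeasurable (μ := ℙ) (f := ζ)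
  apply Measure.ext_of_Iic
  intro x
  rw [Measure.map_apply hζmeas measurableSet_Iic, withDensity_apply _ measurableSet_Iic]
  rcases lt_or_ge x 0 with hx | hx
  · have h1 : ζ ⁻¹' (Iic x) = ∅ := by
      ext ω; simp only [Set.mem_preimage, Set.mem_Iic, Set.mem_empty_iff_false, iff_false, not_le]
      linarith [hζnonneg ω]
    rw [h1, measure_empty]
    symm
    rw [setLIntegral_congr_fun measurableSet_Iic
      ((fun ⦃u⦄ (hu : u ∈ Iic x) => by
        show rayD u = (0 : ℝ≥0∞)
        apply Set.indicator_of_notMem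
        simp only [Set.mem_Ioi, not_lt]
        exact le_of_lt (lt_of_le_of_lt hu hx)))]
    simp
  · -- LHS
    have hms : MeasurableSet {ω | x < ζ ω} := hζmeas measurableSet_Ioi
    have hlhs : ℙ (ζ ⁻¹' Iic x) = 1 - ENNReal.ofReal (Real.exp (-x^2/2)) := by
      have hc : ζ ⁻¹' (Iic x) = {ω | x < ζ ω}ᶜ := by
        ext ω; simp [not_lt]
      rw [hc, measure_compl hms (measure_ne_top _ _), prob_gt ζ hζtail x hx, measure_univ]
    have hrhs : ∫⁻ u in Iic x, rayD u = ENNReal.ofReal (1 - Real.exp (-x^2/2)) := by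
      have e1 : ∫⁻ u in Iic x, rayD u
          = ∫⁻ u in Ioc 0 x, ENNReal.ofReal (u * Real.exp (-u^2/2)) := by
        rw [rayD, lintegral_indicator measurableSet_Ioi,
          Measure.restrict_restrict measurableSet_Ioi, Set.Ioi_inter_Iic]
      rw [e1, ← ofReal_integral_eq_lintegral_ofReal, ← intervalIntegral.integral_of_le hx,
        aux_intB x hx]
      · exact Continuous.integrableOn_Ioc (by continuity)
      · filter_upwards [ae_restrict_mem measurableSet_Ioc] with u hu
        have : (0:ℝ) < u := hu.1
        positivity
    rw [hlhs, hrhs, ENNReal.ofReal_sub _ (Real.exp_nonneg _), ENNReal.ofReal_one]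

noncomputable def jdens : ℝ × ℝ → ℝ≥0∞ := fun p =>
  ENNReal.ofReal
    (if 0 < p.1 ∧ p.1 < p.2 then Real.sqrt (2/Real.pi) * p.2 * Real.exp (-p.2^2/2) else 0)

lemma jdens_meas : Measurable jdens := by
  apply ENNReal.measurable_ofReal.comp
  apply Measurable.ite
  · exact (measurableSet_lt measurable_const measurable_fst).inter
      (measurableSet_lt measurable_fst measurable_snd)
  · measurability
  · exact measurable_const

lemma aux_meas_g : Measurable (fun y : ℝ => ENNReal.ofReal (y * Real.exp (-y^2/2))) :=
  ENNReal.measurable_ofReal.comp (Continuous.measurable (by continuity))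

lemma W_eq (u : ℝ) :
    ∫⁻ p, (if p.1 < u ∧ u ≤ p.2 then jdens p else 0) ∂(volume : Measure (ℝ × ℝ))
      = ENNReal.ofReal (Real.sqrt (2/Real.pi)) * rayD u := by
  set c := Real.sqrt (2/Real.pi) with hcdef
  have hc : 0 ≤ c := Real.sqrt_nonneg _
  have hmeas : Measurable (fun p : ℝ × ℝ => (if p.1 < u ∧ u ≤ p.2 then jdens p else 0)) := by
    apply Measurable.ite ?_ jdens_meas measurable_const
    exact (measurableSet_lt measurable_fst measurable_const).inter
      (measurableSet_le measurable_const measurable_snd)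
  rw [Measure.volume_eq_prod, lintegral_prod_symm _ hmeas.aemeasurable]
  have hpt : ∀ y x : ℝ, (if (x, y).1 < u ∧ u ≤ (x, y).2 then jdens (x, y) else 0)
      = if u ≤ y then (Set.Ioo (0:ℝ) (min y u)).indicator
          (fun _ => ENNReal.ofReal (c * y * Real.exp (-y^2/2))) x else 0 := by
    intro y x
    simp only [jdens, Set.indicator_apply, Set.mem_Ioo, lt_min_iff]
    split_ifs <;> simp_all <;> tauto
  have hinner : ∀ y : ℝ, ∫⁻ x, (if (x, y).1 < u ∧ u ≤ (x, y).2 then jdens (x, y) else 0)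
      = if u ≤ y then ENNReal.ofReal (c * y * Real.exp (-y^2/2)) * ENNReal.ofReal (min y u) else 0 := by
    intro y
    simp only [hpt]
    by_cases hy : u ≤ y
    · simp only [if_pos hy]
      rw [lintegral_indicator_const measurableSet_Ioo, Real.volume_Ioo, sub_zero]
    · simp only [if_neg hy, lintegral_zero]
  simp only [hinner]
  have hIci : ∫⁻ y, (if u ≤ y then ENNReal.ofReal (c * y * Real.exp (-y^2/2)) * ENNReal.ofReal (min y u) else 0)
      = ∫⁻ y in Set.Ici u, ENNReal.ofReal (c * y * Real.exp (-y^2/2)) * ENNReal.ofReal (min y u) := by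
    rw [← lintegral_indicator measurableSet_Ici]
    apply lintegral_congr
    intro y
    simp [Set.indicator_apply]
  rw [hIci]
  rcases le_or_gt u 0 with hu | hu
  · have h0 : ∀ y ∈ Set.Ici u, ENNReal.ofReal (c * y * Real.exp (-y^2/2)) * ENNReal.ofReal (min y u) = 0 := by
      intro y _
      have : min y u ≤ 0 := le_trans (min_le_right _ _) hu
      rw [ENNReal.ofReal_eq_zero.mpr this, mul_zero]
    rw [setLIntegral_congr_fun measurableSet_Ici h0]
    have : rayD u = 0 := Set.indicator_of_notMem (by simpa using hu) _
    simp [this]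
  · have h1 : ∀ y ∈ Set.Ici u, ENNReal.ofReal (c * y * Real.exp (-y^2/2)) * ENNReal.ofReal (min y u)
        = (ENNReal.ofReal c * ENNReal.ofReal u) * ENNReal.ofReal (y * Real.exp (-y^2/2)) := by
      intro y hy
      rw [min_eq_right (Set.mem_Ici.mp hy), mul_assoc c, ENNReal.ofReal_mul hc]
      ring
    rw [setLIntegral_congr_fun measurableSet_Ici h1,
      lintegral_const_mul _ aux_meas_g,
      setLIntegral_congr (Filter.EventuallyEq.symm Ioi_ae_eq_Ici), aux_lintA u hu.le]
    have : rayD u = ENNReal.ofReal u * ENNReal.ofReal (Real.exp (-u^2/2)) := by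
      rw [rayD, Set.indicator_of_mem (Set.mem_Ioi.mpr hu), ENNReal.ofReal_mul hu.le]
    rw [this]
    ring

lemma key_indmeas (f : ℝ → ℝ≥0∞) (hf : Measurable f) :
    Measurable (fun q : (ℝ × ℝ) × ℝ => (Set.Ioc q.1.1 q.1.2).indicator f q.2) := by
  have h : (fun q : (ℝ × ℝ) × ℝ => (Set.Ioc q.1.1 q.1.2).indicator f q.2)
      = fun q : (ℝ × ℝ) × ℝ => if q.1.1 < q.2 ∧ q.2 ≤ q.1.2 then f q.2 else 0 := by
    funext q
    simp [Set.indicator_apply, Set.mem_Ioc]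
  rw [h]
  apply Measurable.ite ?_ (hf.comp measurable_snd) measurable_const
  exact (measurableSet_lt (measurable_fst.comp measurable_fst) measurable_snd).inter
    (measurableSet_le measurable_snd (measurable_snd.comp measurable_fst))

lemma key (f : ℝ → ℝ≥0∞) (hf : Measurable f) :
    ∫⁻ p : ℝ × ℝ, jdens p * ∫⁻ u in Set.Ioc p.1 p.2, f u ∂(volume : Measure ℝ)
      = ENNReal.ofReal (Real.sqrt (2/Real.pi)) * ∫⁻ u, rayD u * f u := by
  have hK : Measurable (Function.uncurry fun (p : ℝ × ℝ) (u : ℝ) =>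
      jdens p * (Set.Ioc p.1 p.2).indicator f u) :=
    ((jdens_meas.comp measurable_fst)).mul (key_indmeas f hf)
  have step1 : ∫⁻ p : ℝ × ℝ, jdens p * ∫⁻ u in Set.Ioc p.1 p.2, f u ∂(volume : Measure ℝ)
      = ∫⁻ p : ℝ × ℝ, ∫⁻ u : ℝ, jdens p * (Set.Ioc p.1 p.2).indicator f u := by
    apply lintegral_congr
    intro p
    rw [← lintegral_indicator measurableSet_Ioc, lintegral_const_mul _ (hf.indicator measurableSet_Ioc)]
  rw [step1, lintegral_lintegral_swap hK.aemeasurable]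
  have step2 : ∀ u : ℝ, ∫⁻ p, jdens p * (Set.Ioc p.1 p.2).indicator f u ∂(volume : Measure (ℝ × ℝ))
      = f u * (ENNReal.ofReal (Real.sqrt (2/Real.pi)) * rayD u) := by
    intro u
    have hpt : ∀ p : ℝ × ℝ, jdens p * (Set.Ioc p.1 p.2).indicator f u
        = f u * (if p.1 < u ∧ u ≤ p.2 then jdens p else 0) := by
      intro p
      simp only [Set.indicator_apply, Set.mem_Ioc]
      split_ifs <;> simp [mul_comm]
    simp only [hpt]
    rw [lintegral_const_mul _ ?_, W_eq u]
    apply Measurable.ite ?_ jdens_meas measurable_const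
    exact (measurableSet_lt measurable_fst measurable_const).inter
      (measurableSet_le measurable_const measurable_snd)
  simp only [step2]
  have hpt2 : ∀ y : ℝ, f y * (ENNReal.ofReal (Real.sqrt (2/Real.pi)) * rayD y)
      = ENNReal.ofReal (Real.sqrt (2/Real.pi)) * (rayD y * f y) := by
    intro y; ring
  simp only [hpt2]
  rw [lintegral_const_mul' _ _ ENNReal.ofReal_ne_top]

/-- With `ζ` Rayleigh and `(ξ, η)` having joint density
`√(2/π) y e^{-y²/2}` on `{0 < x < y}` (i.e. `η` has density `√(2/π) y² e^{-y²/2}`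
and `ξ` is uniform on `(0, η)` given `η`), one has, for every measurable
nonnegative `f`, `𝔼[f(ζ)] = 𝔼[∫_ξ^η f(u) du] / 𝔼[η - ξ]`; in particular, for
`f = 1_{[x,∞)}` with `x > 0`,
`P(ζ ≥ x) = e^{-x²/2} = 𝔼[(η - max(x, ξ))⁺] / 𝔼[η - ξ]`. -/
theorem rayleigh_cycle_formula
    {Ω : Type*} [MeasureSpace Ω] [IsProbabilityMeasure (ℙ : Measure Ω)]
    (ζ ξ η : Ω → ℝ)
    (hζmeas : Measurable ζ) (hξmeas : Measurable ξ) (hηmeas : Measurable η)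
    (hζnonneg : ∀ ω, 0 ≤ ζ ω)
    (hζtail : ∀ x : ℝ, 0 < x →
      ℙ {ω | x ≤ ζ ω} = ENNReal.ofReal (Real.exp (-x ^ 2 / 2)))
    (hjoint : Measure.map (fun ω => (ξ ω, η ω)) ℙ
      = (volume : Measure (ℝ × ℝ)).withDensity (fun p =>
          ENNReal.ofReal
            (if 0 < p.1 ∧ p.1 < p.2 then
              Real.sqrt (2 / Real.pi) * p.2 * Real.exp (-p.2 ^ 2 / 2)
            else 0))) :
    (∀ f : ℝ → ℝ≥0∞, Measurable f →
        ∫⁻ ω, f (ζ ω) ∂ℙ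
          = (∫⁻ ω, ∫⁻ u in Set.Ioc (ξ ω) (η ω), f u ∂volume ∂ℙ)
              / ∫⁻ ω, ENNReal.ofReal (η ω - ξ ω) ∂ℙ)
      ∧ ∀ x : ℝ, 0 < x →
          ℙ {ω | x ≤ ζ ω} = ENNReal.ofReal (Real.exp (-x ^ 2 / 2))
            ∧ ENNReal.ofReal (Real.exp (-x ^ 2 / 2))
                = (∫⁻ ω, ENNReal.ofReal (η ω - max x (ξ ω)) ∂ℙ)
                    / ∫⁻ ω, ENNReal.ofReal (η ω - ξ ω) ∂ℙ := by
  have hcpos : 0 < Real.sqrt (2/Real.pi) := Real.sqrt_pos.mpr (div_pos two_pos Real.pi_pos)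
  have hcne : ENNReal.ofReal (Real.sqrt (2/Real.pi)) ≠ 0 :=
    (ENNReal.ofReal_pos.mpr hcpos).ne'
  have hcnetop : ENNReal.ofReal (Real.sqrt (2/Real.pi)) ≠ ⊤ := ENNReal.ofReal_ne_top
  have hpull : ∀ F : ℝ × ℝ → ℝ≥0∞, Measurable F →
      ∫⁻ ω, F (ξ ω, η ω) ∂ℙ = ∫⁻ p : ℝ × ℝ, jdens p * F p := by
    intro F hF
    rw [← lintegral_map hF (hξmeas.prodMk hηmeas), hjoint,
      show (fun p : ℝ × ℝ => ENNReal.ofReal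
          (if 0 < p.1 ∧ p.1 < p.2 then
            Real.sqrt (2 / Real.pi) * p.2 * Real.exp (-p.2 ^ 2 / 2) else 0)) = jdens from rfl,
      lintegral_withDensity_eq_lintegral_mul _ jdens_meas hF]
    rfl
  have hnum : ∀ f : ℝ → ℝ≥0∞, Measurable f →
      ∫⁻ ω, ∫⁻ u in Set.Ioc (ξ ω) (η ω), f u ∂volume ∂ℙ
        = ENNReal.ofReal (Real.sqrt (2/Real.pi)) * ∫⁻ u, rayD u * f u := by
    intro f hf
    have hG : Measurable (fun p : ℝ × ℝ => ∫⁻ u in Set.Ioc p.1 p.2, f u ∂volume) := by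
      have h1 : (fun p : ℝ × ℝ => ∫⁻ u in Set.Ioc p.1 p.2, f u ∂volume)
          = fun p : ℝ × ℝ => ∫⁻ u, (Set.Ioc p.1 p.2).indicator f u ∂volume := by
        funext p; rw [lintegral_indicator measurableSet_Ioc]
      rw [h1]
      exact Measurable.lintegral_prod_right (key_indmeas f hf)
    rw [hpull _ hG, key f hf]
  have hden : ∫⁻ ω, ENNReal.ofReal (η ω - ξ ω) ∂ℙ = ENNReal.ofReal (Real.sqrt (2/Real.pi)) := by
    have h1 : ∀ ω, ENNReal.ofReal (η ω - ξ ω)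
        = ∫⁻ u in Set.Ioc (ξ ω) (η ω), (1:ℝ≥0∞) ∂volume := by
      intro ω; rw [setLIntegral_one, Real.volume_Ioc]
    simp only [h1]
    rw [hnum _ measurable_const]
    simp [rayD_lintegral]
  have hmap := map_zeta ζ hζmeas hζnonneg hζtail
  have hzeta : ∀ f : ℝ → ℝ≥0∞, Measurable f → ∫⁻ ω, f (ζ ω) ∂ℙ = ∫⁻ u, rayD u * f u := by
    intro f hf
    rw [← lintegral_map hf hζmeas, hmap, lintegral_withDensity_eq_lintegral_mul _ rayD_meas hf]
    rfl
  have part1 : ∀ f : ℝ → ℝ≥0∞, Measurable f →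
      ∫⁻ ω, f (ζ ω) ∂ℙ
        = (∫⁻ ω, ∫⁻ u in Set.Ioc (ξ ω) (η ω), f u ∂volume ∂ℙ)
            / ∫⁻ ω, ENNReal.ofReal (η ω - ξ ω) ∂ℙ := by
    intro f hf
    rw [hzeta f hf, hnum f hf, hden, mul_comm (ENNReal.ofReal _), mul_div_assoc,
      ENNReal.div_self hcne hcnetop, mul_one]
  refine ⟨part1, ?_⟩
  intro x hx
  refine ⟨hζtail x hx, ?_⟩
  have hfind : Measurable ((Set.Ici x).indicator (1 : ℝ → ℝ≥0∞)) :=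
    measurable_one.indicator measurableSet_Ici
  have hl : ∫⁻ ω, (Set.Ici x).indicator (1 : ℝ → ℝ≥0∞) (ζ ω) ∂ℙ = ℙ {ω | x ≤ ζ ω} := by
    have h1 : ∀ ω, (Set.Ici x).indicator (1 : ℝ → ℝ≥0∞) (ζ ω)
        = (ζ ⁻¹' Set.Ici x).indicator (1 : Ω → ℝ≥0∞) ω := by
      intro ω
      by_cases h : x ≤ ζ ω <;> simp [Set.indicator_apply, Set.mem_preimage, h]
    simp only [h1]
    rw [lintegral_indicator_one (hζmeas measurableSet_Ici)]
    rfl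
  have hinner : ∀ ω, ∫⁻ u in Set.Ioc (ξ ω) (η ω), (Set.Ici x).indicator (1 : ℝ → ℝ≥0∞) u ∂volume
      = ENNReal.ofReal (η ω - max x (ξ ω)) := by
    intro ω
    rw [lintegral_indicator_one measurableSet_Ici, Measure.restrict_apply measurableSet_Ici]
    rcases le_or_gt x (ξ ω) with h | h
    · have h2 : Set.Ici x ∩ Set.Ioc (ξ ω) (η ω) = Set.Ioc (ξ ω) (η ω) := by
        apply Set.inter_eq_right.mpr
        intro u hu; exact le_trans h (le_of_lt hu.1)
      rw [h2, Real.volume_Ioc, max_eq_right h]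
    · have h2 : Set.Ici x ∩ Set.Ioc (ξ ω) (η ω) = Set.Icc x (η ω) := by
        ext u
        simp only [Set.mem_inter_iff, Set.mem_Ici, Set.mem_Ioc, Set.mem_Icc]
        constructor
        · rintro ⟨h1, _, h3⟩; exact ⟨h1, h3⟩
        · rintro ⟨h1, h2⟩; exact ⟨h1, lt_of_lt_of_le h h1, h2⟩
      rw [h2, Real.volume_Icc, max_eq_left h.le]
  calc ENNReal.ofReal (Real.exp (-x ^ 2 / 2)) = ℙ {ω | x ≤ ζ ω} := (hζtail x hx).symm
    _ = ∫⁻ ω, (Set.Ici x).indicator (1 : ℝ → ℝ≥0∞) (ζ ω) ∂ℙ := hl.symm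
    _ = (∫⁻ ω, ∫⁻ u in Set.Ioc (ξ ω) (η ω), (Set.Ici x).indicator (1 : ℝ → ℝ≥0∞) u ∂volume ∂ℙ)
          / ∫⁻ ω, ENNReal.ofReal (η ω - ξ ω) ∂ℙ := part1 _ hfind
    _ = (∫⁻ ω, ENNReal.ofReal (η ω - max x (ξ ω)) ∂ℙ)
          / ∫⁻ ω, ENNReal.ofReal (η ω - ξ ω) ∂ℙ := by
        rw [lintegral_congr hinner]
end
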